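/- arXiv:0907.0292 — 2 statements merged into one kernel-verified Lean document; each statement's English description precedes it below -/
import Mathlib

section
/- Let H ∈ (1/2,1) and T > 0. There exists a constant c = c(H,T) > 0 such that for every integer n ≥ 1, ∫_0^T ∫_0^T R(u,v)^{n−1} u^{−Hn} v^{−Hn} du dv ≤ c · n^{−1/(2H)}. (This is the integral bound, cited from Eddahbi–Lacayo–Solé–Vives–Tudor, used to control the off-diagonal terms B(n) in the Sobolev–Watanabe norm of the fractional current.) -/
open MeasureTheory Real

noncomputable def fbmCov (H t s : ℝ) : ℝ :=
  (t ^ (2 * H) + s ^ (2 * H) - |t - s| ^ (2 * H)) / 2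

section Aux
variable {H : ℝ} (hH : 1 / 2 < H) (hH1 : H < 1)

lemma aux_subadd {x y : ℝ} (h0 : 0 ≤ H) (h1 : H ≤ 1) (hx : 0 ≤ x) (hy : 0 ≤ y) :
    (x + y) ^ H ≤ x ^ H + y ^ H := by
  lift x to NNReal using hx
  lift y to NNReal using hy
  rw [← NNReal.coe_add, ← NNReal.coe_rpow, ← NNReal.coe_rpow, ← NNReal.coe_rpow,
    ← NNReal.coe_add, NNReal.coe_le_coe]
  exact NNReal.rpow_add_le_add_rpow x y h0 h1

include hH hH1 in
lemma aux_L1half {t : ℝ} (ht : 0 ≤ t) (ht2 : t ≤ 1/2) :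
    (1 - 2 ^ (H - 1)) * ((1 - t) * t) ^ H ≤ (1 - t) ^ H + t ^ H - 1 := by
  have hHpos : 0 < H := by linarith
  have h2 : (0:ℝ) < 2 ^ (H-1) := rpow_pos_of_pos two_pos _
  have h2' : (2:ℝ) ^ (H-1) < 1 := rpow_lt_one_of_one_lt_of_neg one_lt_two (by linarith)
  rcases eq_or_lt_of_le ht with h0 | ht0
  · rw [← h0]
    simp [Real.zero_rpow hHpos.ne']
  · have hs0 : 0 < 1 - t := by linarith
    have e1 : 1 - t ≤ (1-t)^H := by
      have := Real.rpow_le_rpow_of_exponent_ge hs0 (by linarith) (le_of_lt hH1)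
      rwa [Real.rpow_one] at this
    have e2 : t ^ (1-H) ≤ 2^(H-1) := by
      have h := Real.rpow_le_rpow ht ht2 (by linarith : (0:ℝ) ≤ 1 - H)
      have e : ((1:ℝ)/2) ^ (1-H) = 2 ^ (H-1) := by
        rw [one_div, ← Real.rpow_neg_one 2, ← Real.rpow_mul (by norm_num : (0:ℝ) ≤ 2)]
        ring_nf
      rwa [e] at h
    have e3 : t = t^(1-H) * t^H := by
      rw [← Real.rpow_add ht0]; norm_num
    have e4 : ((1-t)*t)^H = (1-t)^H * t^H := Real.mul_rpow hs0.le ht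
    have e5 : (1-t)^H ≤ 1 := Real.rpow_le_one hs0.le (by linarith) hHpos.le
    have e6 : (0:ℝ) ≤ t^H := Real.rpow_nonneg ht H
    have e7 : (0:ℝ) ≤ (1-t)^H := Real.rpow_nonneg hs0.le H
    have e8 : t^(1-H) * t^H ≤ 2^(H-1) * t^H := mul_le_mul_of_nonneg_right e2 e6
    nlinarith [mul_le_mul_of_nonneg_right e5 e6]

include hH hH1 in
lemma aux_L1 {z : ℝ} (hz : 0 ≤ z) (hz1 : z ≤ 1) :
    (1 - 2 ^ (H - 1)) * (z * (1 - z)) ^ H ≤ z ^ H + (1 - z) ^ H - 1 := by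
  rcases le_or_gt z (1/2) with h | h
  · have := aux_L1half hH hH1 hz h
    rw [show z * (1-z) = (1-z)*z by ring]
    linarith
  · have h' := aux_L1half hH hH1 (t := 1 - z) (by linarith) (by linarith)
    simp only [sub_sub_cancel] at h'
    linarith

include hH hH1 in
lemma aux_L2 {u v : ℝ} (hv : 0 < v) (hvu : v ≤ u) :
    u ^ H - v ^ H ≤ (u - v) ^ H * (1 - (1 - 2 ^ (H - 1)) * (v / u) ^ H) := by
  have hu : 0 < u := lt_of_lt_of_le hv hvu
  have hz0 : 0 ≤ v/u := div_nonneg hv.le hu.le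
  have hz1 : v/u ≤ 1 := div_le_one_of_le₀ hvu hu.le
  have h := aux_L1 hH hH1 hz0 hz1
  have e1 : 1 - v/u = (u-v)/u := by field_simp
  have hw0 : (0:ℝ) ≤ (u - v)/u := by rw [← e1]; linarith
  rw [e1, Real.mul_rpow hz0 hw0, Real.div_rpow hv.le hu.le, Real.div_rpow (by linarith) hu.le]
    at h
  rw [Real.div_rpow hv.le hu.le]
  have hA : (0:ℝ) < u ^ H := Real.rpow_pos_of_pos hu H
  have hB : (0:ℝ) ≤ v ^ H := Real.rpow_nonneg hv.le H
  have hC : (0:ℝ) ≤ (u-v) ^ H := Real.rpow_nonneg (by linarith) H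
  have h2 := mul_le_mul_of_nonneg_right h (mul_pos hA hA).le
  have h3 : (1 - 2 ^ (H - 1)) * (v ^ H * (u-v) ^ H) ≤ (v ^ H + (u-v) ^ H - u ^ H) * u ^ H := by
    calc (1 - 2 ^ (H - 1)) * (v ^ H * (u-v) ^ H)
        = (1 - 2 ^ (H - 1)) * (v ^ H / u ^ H * ((u - v) ^ H / u ^ H)) * (u ^ H * u ^ H) := by
          field_simp
      _ ≤ (v ^ H / u ^ H + (u - v) ^ H / u ^ H - 1) * (u ^ H * u ^ H) := h2
      _ = (v ^ H + (u-v) ^ H - u ^ H) * u ^ H := by field_simp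
  rw [← mul_le_mul_iff_left₀ hA]
  have e2 : (u-v)^H * (1 - (1 - 2^(H-1)) * (v^H / u^H)) * u^H
      = (u-v)^H * u^H - (1 - 2^(H-1)) * (v^H * (u-v)^H) := by
    field_simp
  rw [e2]
  nlinarith [h3]


lemma aux_sq_rpow {x : ℝ} (hx : 0 ≤ x) : x ^ (2 * H) = (x ^ H) ^ 2 := by
  rw [mul_comm, Real.rpow_mul hx, Real.rpow_two]

include hH hH1 in
lemma aux_cov_nonneg {u v : ℝ} (hu : 0 ≤ u) (hv : 0 ≤ v) : 0 ≤ fbmCov H u v := by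
  have h2H : (0:ℝ) ≤ 2 * H := by linarith
  have key : |u - v| ^ (2*H) ≤ u ^ (2*H) + v ^ (2*H) := by
    rcases le_total v u with h | h
    · have h1 : |u - v| ≤ u := by rw [abs_of_nonneg (by linarith)]; linarith
      have := Real.rpow_le_rpow (abs_nonneg _) h1 h2H
      have := Real.rpow_nonneg hv (2*H)
      linarith
    · have h1 : |u - v| ≤ v := by rw [abs_of_nonpos (by linarith)]; linarith
      have := Real.rpow_le_rpow (abs_nonneg _) h1 h2H
      have := Real.rpow_nonneg hu (2*H)
      linarith
  unfold fbmCov; linarith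

include hH hH1 in
lemma aux_cov_symm (u v : ℝ) : fbmCov H u v = fbmCov H v u := by
  unfold fbmCov; rw [abs_sub_comm]; ring

include hH hH1 in
lemma aux_cov_le_mul' {u v : ℝ} (hv : 0 ≤ v) (hvu : v ≤ u) : fbmCov H u v ≤ u ^ H * v ^ H := by
  have hu : 0 ≤ u := le_trans hv hvu
  have habs : |u - v| = u - v := abs_of_nonneg (by linarith)
  have hsub : u ^ H ≤ (u - v) ^ H + v ^ H := by
    have := aux_subadd (H := H) (by linarith) hH1.le (by linarith : (0:ℝ) ≤ u - v) hv
    rwa [sub_add_cancel] at this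
  have hBA : v ^ H ≤ u ^ H := Real.rpow_le_rpow hv hvu (by linarith)
  unfold fbmCov
  rw [habs, aux_sq_rpow hu, aux_sq_rpow hv, aux_sq_rpow (by linarith : (0:ℝ) ≤ u - v)]
  nlinarith [Real.rpow_nonneg hv H, Real.rpow_nonneg (show (0:ℝ) ≤ u - v by linarith) H]

include hH hH1 in
lemma aux_cov_le_mul {u v : ℝ} (hu : 0 ≤ u) (hv : 0 ≤ v) : fbmCov H u v ≤ u ^ H * v ^ H := by
  rcases le_total v u with h | h
  · exact aux_cov_le_mul' hH hH1 hv h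
  · rw [aux_cov_symm hH hH1, mul_comm]; exact aux_cov_le_mul' hH hH1 hu h

include hH hH1 in
lemma aux_cov_le {u v : ℝ} (hv : 0 < v) (hvu : v ≤ u) :
    fbmCov H u v ≤ u ^ H * v ^ H * (1 - ((1 - 2 ^ (H - 1)) / 2) * ((u - v) / u) ^ (2 * H)) := by
  have hu : 0 < u := lt_of_lt_of_le hv hvu
  have hc0 : (0:ℝ) < 1 - 2 ^ (H - 1) := by
    have : (2:ℝ) ^ (H-1) < 1 := rpow_lt_one_of_one_lt_of_neg one_lt_two (by linarith)
    linarith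
  have hc1 : (0:ℝ) < 2 ^ (H - 1) := rpow_pos_of_pos two_pos _
  have hζ0 : (0:ℝ) ≤ (v/u) ^ H := Real.rpow_nonneg (by positivity) H
  have hζ1 : (v/u) ^ H ≤ 1 :=
    Real.rpow_le_one (by positivity) (div_le_one_of_le₀ hvu hu.le) (by linarith)
  have hL2 := aux_L2 hH hH1 hv hvu
  have hd0 : 0 ≤ u ^ H - v ^ H := by
    have := Real.rpow_le_rpow hv.le hvu (by linarith : (0:ℝ) ≤ H)
    linarith
  have hprod : (1 - 2 ^ (H - 1)) * (v/u) ^ H ≤ 1 := by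
    have := mul_le_mul (show 1 - (2:ℝ) ^ (H-1) ≤ 1 by linarith) hζ1 hζ0 (by norm_num : (0:ℝ) ≤ 1)
    simpa using this
  have hfac0 : 0 ≤ 1 - (1 - 2 ^ (H - 1)) * (v/u) ^ H := by linarith
  have hC : (0:ℝ) ≤ (u - v) ^ H := Real.rpow_nonneg (by linarith) H
  have hcz0 : 0 ≤ (1 - 2 ^ (H - 1)) * (v/u) ^ H := mul_nonneg (by linarith) hζ0
  have hsq : (u ^ H - v ^ H)^2 ≤ ((u-v) ^ H)^2 * (1 - (1 - 2 ^ (H - 1)) * (v/u) ^ H) := by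
    nlinarith [mul_le_mul hL2 hL2 hd0 (mul_nonneg hC hfac0),
      mul_nonneg (mul_nonneg (mul_nonneg hC hC) hfac0) hcz0]
  have habs : |u - v| = u - v := abs_of_nonneg (by linarith)
  have hratio : ((u - v)/u) ^ (2*H) = ((u-v) ^ H)^2 / (u ^ H)^2 := by
    rw [Real.div_rpow (by linarith) hu.le, aux_sq_rpow (by linarith), aux_sq_rpow hu.le]
  have hA : (0:ℝ) < u ^ H := Real.rpow_pos_of_pos hu H
  have hB : (0:ℝ) < v ^ H := Real.rpow_pos_of_pos hv H
  have hζ : (v/u) ^ H = v ^ H / u ^ H := Real.div_rpow hv.le hu.le H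
  unfold fbmCov
  rw [habs, aux_sq_rpow hu.le, aux_sq_rpow hv.le, aux_sq_rpow (by linarith : (0:ℝ) ≤ u - v),
    hratio]
  rw [hζ] at hsq
  have expand : u ^ H * v ^ H * (1 - (1 - 2 ^ (H-1))/2 * (((u-v) ^ H)^2 / (u ^ H)^2))
      = u ^ H * v ^ H - (1 - 2 ^ (H-1))/2 * (v ^ H / u ^ H) * ((u-v) ^ H)^2 := by
    field_simp
  rw [expand]
  have hsq' : (u ^ H - v ^ H)^2 ≤ ((u-v) ^ H)^2 - (1 - 2 ^ (H-1)) * (v ^ H / u ^ H) * ((u-v) ^ H)^2 := by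
    nlinarith [hsq]
  nlinarith [hsq']

lemma aux_pow_le_inv {t : ℝ} (m : ℕ) (h0 : 0 ≤ t) (h1 : t ≤ 1) :
    (1 - t) ^ m ≤ (1 + m * t)⁻¹ := by
  have hpos : (0:ℝ) < 1 + m * t := by positivity
  rw [inv_eq_one_div, le_div_iff₀ hpos]
  have key1 : 1 + (m:ℝ) * t ≤ (1 + t) ^ m := by
    have := one_add_mul_le_pow (show (-2:ℝ) ≤ t by linarith) m
    linarith
  have key2 : (1 - t) ^ m * (1 + t) ^ m ≤ 1 := by
    rw [← mul_pow]
    apply pow_le_one₀ <;> nlinarith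
  have h1m : (0:ℝ) ≤ (1 - t) ^ m := pow_nonneg (by linarith) m
  calc (1 - t) ^ m * (1 + m * t) ≤ (1 - t) ^ m * (1 + t) ^ m :=
        mul_le_mul_of_nonneg_left key1 h1m
    _ ≤ 1 := key2

include hH hH1 in
lemma aux_f_le {m : ℕ} {u v τ : ℝ} (hu : 0 < u) (hv : 0 < v) (hτ0 : 0 ≤ τ) (hτ1 : τ ≤ 1)
    (hcov : fbmCov H u v ≤ u ^ H * v ^ H * (1 - τ)) :
    (fbmCov H u v) ^ m * u ^ (-(H * (m + 1))) * v ^ (-(H * (m + 1))) ≤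
      u ^ (-H) * v ^ (-H) * (1 + m * τ)⁻¹ := by
  have hR0 := aux_cov_nonneg hH hH1 hu.le hv.le
  have h1 : (fbmCov H u v) ^ m ≤ ((u ^ H * v ^ H) * (1 - τ)) ^ m := by
    apply pow_le_pow_left₀ hR0
    rw [mul_assoc] at hcov ⊢
    exact hcov
  have pu : (0:ℝ) < u ^ (-(H * ((m:ℝ) + 1))) := Real.rpow_pos_of_pos hu _
  have pv : (0:ℝ) < v ^ (-(H * ((m:ℝ) + 1))) := Real.rpow_pos_of_pos hv _
  have pA : (0:ℝ) < (u ^ H) ^ m * (v ^ H) ^ m :=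
    mul_pos (pow_pos (Real.rpow_pos_of_pos hu _) m) (pow_pos (Real.rpow_pos_of_pos hv _) m)
  have h2 : (fbmCov H u v) ^ m ≤ (u ^ H) ^ m * (v ^ H) ^ m * (1 + m * τ)⁻¹ := by
    calc (fbmCov H u v) ^ m ≤ ((u ^ H * v ^ H) * (1 - τ)) ^ m := h1
      _ = (u ^ H) ^ m * (v ^ H) ^ m * (1 - τ) ^ m := by rw [mul_pow, mul_pow]
      _ ≤ (u ^ H) ^ m * (v ^ H) ^ m * (1 + m * τ)⁻¹ :=
          mul_le_mul_of_nonneg_left (aux_pow_le_inv m hτ0 hτ1) pA.le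
  have eu : (u ^ H) ^ m * u ^ (-(H * ((m:ℝ) + 1))) = u ^ (-H) := by
    rw [← Real.rpow_natCast (u ^ H) m, ← Real.rpow_mul hu.le, ← Real.rpow_add hu]
    congr 1
    ring
  have ev : (v ^ H) ^ m * v ^ (-(H * ((m:ℝ) + 1))) = v ^ (-H) := by
    rw [← Real.rpow_natCast (v ^ H) m, ← Real.rpow_mul hv.le, ← Real.rpow_add hv]
    congr 1
    ring
  calc (fbmCov H u v) ^ m * u ^ (-(H * ((m:ℝ) + 1))) * v ^ (-(H * ((m:ℝ) + 1)))
      ≤ (u ^ H) ^ m * (v ^ H) ^ m * (1 + m * τ)⁻¹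
          * u ^ (-(H * ((m:ℝ) + 1))) * v ^ (-(H * ((m:ℝ) + 1))) := by
        exact mul_le_mul_of_nonneg_right (mul_le_mul_of_nonneg_right h2 pu.le) pv.le
    _ = u ^ (-H) * v ^ (-H) * (1 + m * τ)⁻¹ := by
        rw [← eu, ← ev]; ring

set_option maxHeartbeats 1000000 in
include hH hH1 in
lemma aux_master_core {m : ℕ} (hm : 1 ≤ m) {u v w : ℝ} (hu : 0 < u) (hv : 0 < v)
    (hw0 : 0 ≤ w) (hw1 : w ≤ 1)
    (hcov : fbmCov H u v ≤ u ^ H * v ^ H * (1 - (1 - 2 ^ (H - 1)) / 2 * w ^ (2 * H)))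
    (hcase : 1 / 2 ≤ w ∨ (|v - u| / (2 * u) ≤ w ∧ u / 2 ≤ v)) :
    (fbmCov H u v) ^ m * u ^ (-(H * (m + 1))) * v ^ (-(H * (m + 1))) ≤
      4 / (m * ((1 - 2 ^ (H - 1)) / 2)) * (u ^ (-H) * v ^ (-H))
      + 2 ^ H * u ^ (-(2 * H)) *
        (1 + (m * ((1 - 2 ^ (H - 1)) / 2)) * (|v - u| / (2 * u)) ^ (2 * H))⁻¹ := by
  have hHpos : 0 < H := by linarith
  have hc0 : (0:ℝ) < 1 - 2 ^ (H - 1) := by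
    have : (2:ℝ) ^ (H - 1) < 1 := rpow_lt_one_of_one_lt_of_neg one_lt_two (by linarith)
    linarith
  have hc1 : (0:ℝ) < 2 ^ (H - 1) := rpow_pos_of_pos two_pos _
  have hκ : (0:ℝ) < (1 - 2 ^ (H - 1)) / 2 := by linarith
  have hκ2 : (1 - 2 ^ (H - 1)) / 2 ≤ (1:ℝ) / 2 := by linarith
  have hm1 : (1:ℝ) ≤ (m:ℝ) := by exact_mod_cast hm
  have hmκ : 0 < (m:ℝ) * ((1 - 2 ^ (H - 1)) / 2) := by positivity
  have habs0 : 0 ≤ |v - u| / (2 * u) := by positivity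
  have hφpos : 0 < 1 + ((m:ℝ) * ((1 - 2 ^ (H - 1)) / 2)) * (|v - u| / (2 * u)) ^ (2 * H) := by
    have := Real.rpow_nonneg habs0 (2 * H)
    nlinarith
  have hT1 : (0:ℝ) ≤ 4 / ((m:ℝ) * ((1 - 2 ^ (H - 1)) / 2)) * (u ^ (-H) * v ^ (-H)) := by
    positivity
  have hT2 : (0:ℝ) ≤ 2 ^ H * u ^ (-(2 * H)) *
      (1 + ((m:ℝ) * ((1 - 2 ^ (H - 1)) / 2)) * (|v - u| / (2 * u)) ^ (2 * H))⁻¹ := by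
    positivity
  have huH : (0:ℝ) < u ^ (-H) := Real.rpow_pos_of_pos hu _
  have hvH : (0:ℝ) < v ^ (-H) := Real.rpow_pos_of_pos hv _
  have hτ0 : 0 ≤ (1 - 2 ^ (H - 1)) / 2 * w ^ (2 * H) :=
    mul_nonneg hκ.le (Real.rpow_nonneg hw0 _)
  have hτ1 : (1 - 2 ^ (H - 1)) / 2 * w ^ (2 * H) ≤ 1 := by
    have : w ^ (2 * H) ≤ 1 := Real.rpow_le_one hw0 hw1 (by linarith)
    nlinarith
  have hkey := aux_f_le hH hH1 (m := m) hu hv hτ0 hτ1 hcov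
  rcases hcase with hfar | ⟨hwabs, hnear⟩
  · -- far case : w ≥ 1/2, bound by the first term
    have hq : (1:ℝ)/4 ≤ w ^ (2 * H) := by
      calc (1:ℝ)/4 = (1/2 : ℝ) ^ (2:ℝ) := by rw [Real.rpow_two]; norm_num
        _ ≤ (1/2 : ℝ) ^ (2*H) := by
            apply Real.rpow_le_rpow_of_exponent_ge (by norm_num) (by norm_num)
            linarith
        _ ≤ w ^ (2*H) := Real.rpow_le_rpow (by norm_num) hfar (by linarith)
    have hinv : (1 + (m:ℝ) * ((1 - 2 ^ (H - 1)) / 2 * w ^ (2 * H)))⁻¹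
        ≤ 4 / ((m:ℝ) * ((1 - 2 ^ (H - 1)) / 2)) := by
      have hden : (m:ℝ) * ((1 - 2 ^ (H - 1)) / 2) / 4
          ≤ 1 + (m:ℝ) * ((1 - 2 ^ (H - 1)) / 2 * w ^ (2 * H)) := by
        nlinarith
      calc (1 + (m:ℝ) * ((1 - 2 ^ (H - 1)) / 2 * w ^ (2 * H)))⁻¹
          ≤ ((m:ℝ) * ((1 - 2 ^ (H - 1)) / 2) / 4)⁻¹ := inv_anti₀ (by positivity) hden
        _ = 4 / ((m:ℝ) * ((1 - 2 ^ (H - 1)) / 2)) := by rw [inv_div]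
    calc (fbmCov H u v) ^ m * u ^ (-(H * (m + 1))) * v ^ (-(H * (m + 1)))
        ≤ u ^ (-H) * v ^ (-H) * (1 + m * ((1 - 2 ^ (H - 1)) / 2 * w ^ (2 * H)))⁻¹ := hkey
      _ ≤ u ^ (-H) * v ^ (-H) * (4 / ((m:ℝ) * ((1 - 2 ^ (H - 1)) / 2))) :=
          mul_le_mul_of_nonneg_left hinv (by positivity)
      _ = 4 / ((m:ℝ) * ((1 - 2 ^ (H - 1)) / 2)) * (u ^ (-H) * v ^ (-H)) := by ring
      _ ≤ _ := le_add_of_nonneg_right hT2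
  · -- near case : u/2 ≤ v, bound by the second term
    have hvinv : v ^ (-H) ≤ 2 ^ H * u ^ (-H) := by
      have h2neg : (2:ℝ) ^ (-H) = ((2:ℝ) ^ H)⁻¹ := Real.rpow_neg (by norm_num) H
      have h1 : (u/2) ^ (-H) = 2 ^ H * u ^ (-H) := by
        rw [Real.div_rpow hu.le (by norm_num : (0:ℝ) ≤ 2), h2neg, div_eq_mul_inv, inv_inv]
        ring
      rw [← h1]
      exact Real.rpow_le_rpow_of_nonpos (by linarith) hnear (by linarith)
    have hφ : (1 + (m:ℝ) * ((1 - 2 ^ (H - 1)) / 2 * w ^ (2 * H)))⁻¹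
        ≤ (1 + ((m:ℝ) * ((1 - 2 ^ (H - 1)) / 2)) * (|v - u| / (2 * u)) ^ (2 * H))⁻¹ := by
      apply inv_anti₀ hφpos
      have : (|v - u| / (2 * u)) ^ (2 * H) ≤ w ^ (2 * H) :=
        Real.rpow_le_rpow habs0 hwabs (by linarith)
      nlinarith
    have hu2H : u ^ (-H) * u ^ (-H) = u ^ (-(2 * H)) := by
      rw [← Real.rpow_add hu]; congr 1; ring
    calc (fbmCov H u v) ^ m * u ^ (-(H * (m + 1))) * v ^ (-(H * (m + 1)))
        ≤ u ^ (-H) * v ^ (-H) * (1 + m * ((1 - 2 ^ (H - 1)) / 2 * w ^ (2 * H)))⁻¹ := hkey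
      _ ≤ u ^ (-H) * (2 ^ H * u ^ (-H)) *
            (1 + ((m:ℝ) * ((1 - 2 ^ (H - 1)) / 2)) * (|v - u| / (2 * u)) ^ (2 * H))⁻¹ := by
          apply mul_le_mul (mul_le_mul_of_nonneg_left hvinv huH.le) hφ
            (by positivity) (by positivity)
      _ = 2 ^ H * u ^ (-(2 * H)) *
            (1 + ((m:ℝ) * ((1 - 2 ^ (H - 1)) / 2)) * (|v - u| / (2 * u)) ^ (2 * H))⁻¹ := by
          rw [← hu2H]; ring
      _ ≤ _ := le_add_of_nonneg_left hT1

include hH hH1 in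
lemma aux_master {m : ℕ} (hm : 1 ≤ m) {u v : ℝ} (hu : 0 < u) (hv : 0 ≤ v) :
    (fbmCov H u v) ^ m * u ^ (-(H * (m + 1))) * v ^ (-(H * (m + 1))) ≤
      4 / (m * ((1 - 2 ^ (H - 1)) / 2)) * (u ^ (-H) * v ^ (-H))
      + 2 ^ H * u ^ (-(2 * H)) *
        (1 + (m * ((1 - 2 ^ (H - 1)) / 2)) * (|v - u| / (2 * u)) ^ (2 * H))⁻¹ := by
  have hHpos : 0 < H := by linarith
  have hm1 : (1:ℝ) ≤ (m:ℝ) := by exact_mod_cast hm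
  have hc0 : (0:ℝ) < 1 - 2 ^ (H - 1) := by
    have : (2:ℝ) ^ (H - 1) < 1 := rpow_lt_one_of_one_lt_of_neg one_lt_two (by linarith)
    linarith
  rcases eq_or_lt_of_le hv with hv0 | hv
  · rw [← hv0, Real.zero_rpow (ne_of_lt (by nlinarith : -(H * ((m:ℝ) + 1)) < 0)), mul_zero]
    rw [Real.zero_rpow (ne_of_lt (by linarith : -H < 0)), mul_zero, mul_zero, zero_add]
    have habs0 : (0:ℝ) ≤ |0 - u| / (2 * u) := by positivity
    have hr := Real.rpow_nonneg habs0 (2 * H)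
    apply mul_nonneg (mul_nonneg (Real.rpow_nonneg (by norm_num) H) (Real.rpow_nonneg hu.le _))
    apply inv_nonneg.mpr
    nlinarith [mul_nonneg (mul_nonneg (by linarith : (0:ℝ) ≤ (m:ℝ))
      (by linarith : (0:ℝ) ≤ (1 - 2 ^ (H - 1)) / 2)) hr]
  rcases le_total v u with hvu | huv
  · -- v ≤ u : use w = (u-v)/u
    have habs : |v - u| = u - v := by rw [abs_sub_comm]; exact abs_of_nonneg (by linarith)
    have hw0 : 0 ≤ (u - v) / u := div_nonneg (by linarith) hu.le
    have hw1 : (u - v) / u ≤ 1 := by rw [div_le_one hu]; linarith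
    apply aux_master_core hH hH1 hm hu hv hw0 hw1 (aux_cov_le hH hH1 hv hvu)
    rcases le_total v (u/2) with hhalf | hhalf
    · left
      rw [le_div_iff₀ hu]; linarith
    · right
      constructor
      · rw [habs, div_le_div_iff₀ (mul_pos two_pos hu) hu]
        nlinarith
      · exact hhalf
  · -- u ≤ v : use w = (v-u)/v
    have habs : |v - u| = v - u := abs_of_nonneg (by linarith)
    have hw0 : 0 ≤ (v - u) / v := div_nonneg (by linarith) hv.le
    have hw1 : (v - u) / v ≤ 1 := by rw [div_le_one hv]; linarith
    have hcov : fbmCov H u v ≤ u ^ H * v ^ H * (1 - (1 - 2 ^ (H - 1)) / 2 * ((v - u) / v) ^ (2 * H)) := by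
      rw [aux_cov_symm hH hH1]
      calc fbmCov H v u ≤ v ^ H * u ^ H * (1 - (1 - 2 ^ (H - 1)) / 2 * ((v - u) / v) ^ (2*H)) :=
            aux_cov_le hH hH1 hu huv
        _ = u ^ H * v ^ H * (1 - (1 - 2 ^ (H - 1)) / 2 * ((v - u) / v) ^ (2*H)) := by ring
    apply aux_master_core hH hH1 hm hu hv hw0 hw1 hcov
    rcases le_total (2*u) v with hfar | hnear
    · left
      rw [le_div_iff₀ hv]; linarith
    · right
      constructor
      · rw [habs, div_le_div_iff₀ (mul_pos two_pos hu) hv]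
        nlinarith
      · linarith

include hH hH1 in
lemma aux_phi_cont {μ c d : ℝ} (hμ : 0 ≤ μ) (hd : 0 < d) :
    Continuous (fun v : ℝ => (1 + μ * (|v - c| / d) ^ (2 * H))⁻¹) := by
  have h1 : Continuous (fun v : ℝ => (|v - c| / d) ^ (2 * H)) := by
    apply (Real.continuous_rpow_const (by linarith)).comp
    exact (continuous_id.sub continuous_const).abs.div_const d
  apply ((continuous_const.add (continuous_const.mul h1))).inv₀
  intro x
  have h2 : 0 ≤ (|x - c| / d) ^ (2 * H) := Real.rpow_nonneg (by positivity) _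
  simp only [Pi.add_apply, Pi.mul_apply]; nlinarith

include hH hH1 in
lemma aux_phi_cont' {μ : ℝ} (hμ : 0 ≤ μ) {a b : ℝ} (ha : 0 ≤ a) (hab : a ≤ b) :
    IntervalIntegrable (fun w : ℝ => (1 + μ * w ^ (2 * H))⁻¹) volume a b := by
  apply ContinuousOn.intervalIntegrable
  rw [Set.uIcc_of_le hab]
  have hsub : Set.Icc a b ⊆ Set.Ici (0:ℝ) := fun x hx => le_trans ha hx.1
  apply ContinuousOn.inv₀
  · apply ContinuousOn.add continuousOn_const
    apply ContinuousOn.mul continuousOn_const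
    exact ContinuousOn.rpow_const continuousOn_id (fun x hx => Or.inr (by linarith))
  · intro x hx
    have h2 : 0 ≤ x ^ (2 * H) := Real.rpow_nonneg (hsub hx) _
    nlinarith

include hH hH1 in
lemma aux_J {μ : ℝ} (hμ : 0 < μ) {b : ℝ} (hb : 0 ≤ b) :
    ∫ w in (0:ℝ)..b, (1 + μ * w ^ (2 * H))⁻¹ ≤ (2 * H / (2 * H - 1)) * μ ^ (-(1 / (2 * H))) := by
  have hHpos : 0 < H := by linarith
  have h2H : 1 < 2 * H := by linarith
  set w₀ : ℝ := μ ^ (-(1 / (2 * H))) with hw₀def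
  have hw₀ : 0 < w₀ := Real.rpow_pos_of_pos hμ _
  have hfac : 1 ≤ 2 * H / (2 * H - 1) := by
    rw [le_div_iff₀ (by linarith)]; linarith
  have hone : ∀ w ∈ Set.Icc (0:ℝ) b, (1 + μ * w ^ (2 * H))⁻¹ ≤ 1 := by
    intro w hw
    have h2 : 0 ≤ w ^ (2 * H) := Real.rpow_nonneg hw.1 _
    rw [inv_le_one_iff₀]
    right; nlinarith
  have hmono : ∀ x y : ℝ, 0 ≤ x → x ≤ y →
      ∫ w in x..y, (1 + μ * w ^ (2 * H))⁻¹ ≤ y - x := by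
    intro x y hx hxy
    calc ∫ w in x..y, (1 + μ * w ^ (2 * H))⁻¹ ≤ ∫ _ in x..y, (1:ℝ) := by
          apply intervalIntegral.integral_mono_on hxy
            (aux_phi_cont' hH hH1 hμ.le hx hxy) intervalIntegrable_const
          intro w hw
          have h2 : 0 ≤ w ^ (2 * H) := Real.rpow_nonneg (le_trans hx hw.1) _
          rw [inv_le_one_iff₀]; right; nlinarith
      _ = y - x := by simp
  rcases le_total b w₀ with hbw | hwb
  · calc ∫ w in (0:ℝ)..b, (1 + μ * w ^ (2 * H))⁻¹ ≤ b - 0 := hmono 0 b le_rfl hb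
      _ ≤ w₀ := by linarith
      _ ≤ (2 * H / (2 * H - 1)) * w₀ := le_mul_of_one_le_left hw₀.le hfac
  · -- w₀ ≤ b : split at w₀
    have hsplit : ∫ w in (0:ℝ)..b, (1 + μ * w ^ (2 * H))⁻¹
        = (∫ w in (0:ℝ)..w₀, (1 + μ * w ^ (2 * H))⁻¹)
          + ∫ w in w₀..b, (1 + μ * w ^ (2 * H))⁻¹ := by
      rw [intervalIntegral.integral_add_adjacent_intervals
        (aux_phi_cont' hH hH1 hμ.le le_rfl hw₀.le) (aux_phi_cont' hH hH1 hμ.le hw₀.le hwb)]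
    have hpiece1 : ∫ w in (0:ℝ)..w₀, (1 + μ * w ^ (2 * H))⁻¹ ≤ w₀ := by
      have := hmono 0 w₀ le_rfl hw₀.le
      linarith
    have hInt2 : IntervalIntegrable (fun w : ℝ => μ⁻¹ * w ^ (-(2 * H))) volume w₀ b := by
      apply ContinuousOn.intervalIntegrable
      rw [Set.uIcc_of_le hwb]
      apply ContinuousOn.mul continuousOn_const
      apply ContinuousOn.rpow_const continuousOn_id
      intro x hx
      exact Or.inl (ne_of_gt (lt_of_lt_of_le hw₀ hx.1))
    have hpiece2 : ∫ w in w₀..b, (1 + μ * w ^ (2 * H))⁻¹ ≤ w₀ / (2 * H - 1) := by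
      calc ∫ w in w₀..b, (1 + μ * w ^ (2 * H))⁻¹
          ≤ ∫ w in w₀..b, μ⁻¹ * w ^ (-(2 * H)) := by
            apply intervalIntegral.integral_mono_on hwb
              (aux_phi_cont' hH hH1 hμ.le hw₀.le hwb) hInt2
            intro w hw
            have hwpos : 0 < w := lt_of_lt_of_le hw₀ hw.1
            have hr : w ^ (-(2 * H)) = (w ^ (2 * H))⁻¹ := Real.rpow_neg hwpos.le _
            have hrpos : 0 < w ^ (2 * H) := Real.rpow_pos_of_pos hwpos _
            rw [hr, ← mul_inv]
            apply inv_anti₀ (by positivity)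
            nlinarith
        _ = μ⁻¹ * ∫ w in w₀..b, w ^ (-(2 * H)) := intervalIntegral.integral_const_mul _ _
        _ = μ⁻¹ * ((b ^ (-(2 * H) + 1) - w₀ ^ (-(2 * H) + 1)) / (-(2 * H) + 1)) := by
            rw [integral_rpow]
            right
            constructor
            · intro hcontra
              have : 2 * H = 1 := by linarith [neg_eq_iff_eq_neg.mp hcontra]
              linarith
            · rw [Set.uIcc_of_le hwb]
              intro hc
              exact absurd hc.1 (not_le.mpr hw₀)
        _ ≤ μ⁻¹ * (w₀ ^ (-(2 * H) + 1) / (2 * H - 1)) := by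
            have hb1 : (0:ℝ) ≤ b ^ (-(2 * H) + 1) :=
              Real.rpow_nonneg (le_trans hw₀.le hwb) _
            have : (b ^ (-(2 * H) + 1) - w₀ ^ (-(2 * H) + 1)) / (-(2 * H) + 1)
                = (w₀ ^ (-(2 * H) + 1) - b ^ (-(2 * H) + 1)) / (2 * H - 1) := by
              rw [div_eq_div_iff (by linarith) (by linarith)]; ring
            rw [this]
            apply mul_le_mul_of_nonneg_left _ (by positivity)
            exact (div_le_div_iff_of_pos_right (by linarith)).mpr (by linarith)
        _ = w₀ / (2 * H - 1) := by
            have hkey : w₀ ^ (-(2 * H) + 1) = μ * w₀ := by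
              rw [Real.rpow_add hw₀, Real.rpow_one, hw₀def, ← Real.rpow_mul hμ.le,
                neg_mul_neg, one_div, inv_mul_cancel₀ (by linarith : 2 * H ≠ 0),
                Real.rpow_one]
            rw [hkey]
            field_simp
    rw [hsplit]
    have hsum : w₀ + w₀ / (2 * H - 1) = 2 * H / (2 * H - 1) * w₀ := by
      have h0 : 2 * H - 1 ≠ 0 := by linarith
      field_simp
      ring
    linarith

include hH hH1 in
lemma aux_cov_cont (u : ℝ) : Continuous (fun v : ℝ => fbmCov H u v) := by
  have h2H : (0:ℝ) ≤ 2 * H := by linarith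
  unfold fbmCov
  exact ((continuous_const.add
    ((Real.continuous_rpow_const h2H).comp continuous_id)).sub
    ((Real.continuous_rpow_const h2H).comp ((continuous_const.sub continuous_id).abs))).div_const 2

include hH hH1 in
lemma aux_f_nonneg {m : ℕ} {u v : ℝ} (hu : 0 ≤ u) (hv : 0 ≤ v) :
    0 ≤ (fbmCov H u v) ^ m * u ^ (-(H * (m + 1))) * v ^ (-(H * (m + 1))) :=
  mul_nonneg (mul_nonneg (pow_nonneg (aux_cov_nonneg hH hH1 hu hv) m)
    (Real.rpow_nonneg hu _)) (Real.rpow_nonneg hv _)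

include hH hH1 in
lemma aux_f_le_simple {m : ℕ} {u v : ℝ} (hu : 0 < u) (hv : 0 ≤ v) :
    (fbmCov H u v) ^ m * u ^ (-(H * (m + 1))) * v ^ (-(H * (m + 1)))
      ≤ u ^ (-H) * v ^ (-H) := by
  have hHpos : 0 < H := by linarith
  rcases eq_or_lt_of_le hv with hv0 | hv
  · rw [← hv0, Real.zero_rpow (ne_of_lt (by nlinarith : -(H * ((m:ℝ) + 1)) < 0)), mul_zero,
      Real.zero_rpow (ne_of_lt (by linarith : -H < 0)), mul_zero]
  · have hcov : fbmCov H u v ≤ u ^ H * v ^ H * (1 - 0) := by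
      rw [sub_zero, mul_one]
      exact aux_cov_le_mul hH hH1 hu.le hv.le
    have := aux_f_le hH hH1 (m := m) hu hv le_rfl zero_le_one hcov
    simpa using this

include hH hH1 in
lemma aux_f_integrable {m : ℕ} {u : ℝ} (hu : 0 < u) {a b : ℝ} (ha : 0 ≤ a) (hab : a ≤ b) :
    IntervalIntegrable
      (fun v => (fbmCov H u v) ^ m * u ^ (-(H * (m + 1))) * v ^ (-(H * (m + 1))))
      volume a b := by
  have hmeas : AEStronglyMeasurable
      (fun v => (fbmCov H u v) ^ m * u ^ (-(H * (m + 1))) * v ^ (-(H * (m + 1))))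
      (volume.restrict (Set.uIoc a b)) := by
    apply ContinuousOn.aestronglyMeasurable _ measurableSet_uIoc
    rw [Set.uIoc_of_le hab]
    apply ContinuousOn.mul
    · exact (((aux_cov_cont hH hH1 u).pow m).mul continuous_const).continuousOn
    · exact ContinuousOn.rpow_const continuousOn_id
        (fun x hx => Or.inl (ne_of_gt (lt_of_le_of_lt ha hx.1)))
  apply IntervalIntegrable.mono_fun' (g := fun v => u ^ (-H) * v ^ (-H)) _ hmeas
  · filter_upwards [ae_restrict_mem measurableSet_uIoc] with v hv
    rw [Set.uIoc_of_le hab] at hv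
    have hv0 : 0 ≤ v := le_of_lt (lt_of_le_of_lt ha hv.1)
    rw [Real.norm_eq_abs, abs_of_nonneg (aux_f_nonneg hH hH1 hu.le hv0)]
    exact aux_f_le_simple hH hH1 hu hv0
  · exact (intervalIntegral.intervalIntegrable_rpow' (by linarith)).const_mul _

include hH hH1 in
lemma aux_rpow_integral {T : ℝ} (hT : 0 ≤ T) :
    ∫ v in (0:ℝ)..T, v ^ (-H) = T ^ (1 - H) / (1 - H) := by
  rw [integral_rpow (Or.inl (by linarith : (-1:ℝ) < -H))]
  rw [Real.zero_rpow (by intro h; linarith [h.ge, h.le] : -H + 1 ≠ 0), sub_zero,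
    show -H + 1 = 1 - H by ring]

include hH hH1 in
lemma aux_inner {T : ℝ} (hT : 0 < T) {m : ℕ} (hm : 1 ≤ m) {u : ℝ} (hu : 0 < u) (huT : u ≤ T) :
    ∫ v in (0:ℝ)..T, (fbmCov H u v) ^ m * u ^ (-(H * (m + 1))) * v ^ (-(H * (m + 1)))
      ≤ (4 / (m * ((1 - 2 ^ (H - 1)) / 2)) * (T ^ (1 - H) / (1 - H))) * u ^ (-H)
        + (2 ^ H * (2 * H / (2 * H - 1))
            * ((m:ℝ) * ((1 - 2 ^ (H - 1)) / 2)) ^ (-(1 / (2 * H))) * 4) * u ^ (1 - 2 * H) := by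
  have hHpos : 0 < H := by linarith
  have hc0 : (0:ℝ) < 1 - 2 ^ (H - 1) := by
    have : (2:ℝ) ^ (H - 1) < 1 := rpow_lt_one_of_one_lt_of_neg one_lt_two (by linarith)
    linarith
  have hm1 : (1:ℝ) ≤ (m:ℝ) := by exact_mod_cast hm
  have hκ : (0:ℝ) < (1 - 2 ^ (H - 1)) / 2 := by linarith
  have hmκ : (0:ℝ) < (m:ℝ) * ((1 - 2 ^ (H - 1)) / 2) := by positivity
  have h2u : (0:ℝ) < 2 * u := by linarith
  -- integrability of the two majorant pieces
  have hg1 : IntervalIntegrable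
      (fun v : ℝ => 4 / ((m:ℝ) * ((1 - 2 ^ (H - 1)) / 2)) * (u ^ (-H) * v ^ (-H)))
      volume 0 T := by
    have := ((intervalIntegral.intervalIntegrable_rpow'
      (by linarith : (-1:ℝ) < -H)).const_mul
      (4 / ((m:ℝ) * ((1 - 2 ^ (H - 1)) / 2)) * u ^ (-H)) : IntervalIntegrable _ volume 0 T)
    simpa [mul_assoc] using this
  have hg2 : IntervalIntegrable
      (fun v : ℝ => 2 ^ H * u ^ (-(2 * H)) *
        (1 + ((m:ℝ) * ((1 - 2 ^ (H - 1)) / 2)) * (|v - u| / (2 * u)) ^ (2 * H))⁻¹)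
      volume 0 T :=
    ((aux_phi_cont hH hH1 hmκ.le h2u).intervalIntegrable 0 T).const_mul _
  -- step 1 : compare with the master bound
  have step1 : ∫ v in (0:ℝ)..T, (fbmCov H u v) ^ m * u ^ (-(H * (m + 1))) * v ^ (-(H * (m + 1)))
      ≤ ∫ v in (0:ℝ)..T,
          (4 / ((m:ℝ) * ((1 - 2 ^ (H - 1)) / 2)) * (u ^ (-H) * v ^ (-H))
          + 2 ^ H * u ^ (-(2 * H)) *
            (1 + ((m:ℝ) * ((1 - 2 ^ (H - 1)) / 2)) * (|v - u| / (2 * u)) ^ (2 * H))⁻¹) := by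
    apply intervalIntegral.integral_mono_on hT.le
      (aux_f_integrable hH hH1 hu le_rfl hT.le) (hg1.add hg2)
    intro v hv
    exact aux_master hH hH1 hm hu hv.1
  rw [intervalIntegral.integral_add hg1 hg2] at step1
  -- step 2 : the first piece
  have e1 : ∫ v in (0:ℝ)..T, 4 / ((m:ℝ) * ((1 - 2 ^ (H - 1)) / 2)) * (u ^ (-H) * v ^ (-H))
      = (4 / ((m:ℝ) * ((1 - 2 ^ (H - 1)) / 2)) * (T ^ (1 - H) / (1 - H))) * u ^ (-H) := by
    simp_rw [← mul_assoc]
    rw [intervalIntegral.integral_const_mul, aux_rpow_integral hH hH1 hT.le]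
    ring
  -- step 3 : the second piece
  have e2 : ∫ v in (0:ℝ)..T, 2 ^ H * u ^ (-(2 * H)) *
        (1 + ((m:ℝ) * ((1 - 2 ^ (H - 1)) / 2)) * (|v - u| / (2 * u)) ^ (2 * H))⁻¹
      ≤ (2 ^ H * (2 * H / (2 * H - 1))
          * ((m:ℝ) * ((1 - 2 ^ (H - 1)) / 2)) ^ (-(1 / (2 * H))) * 4) * u ^ (1 - 2 * H) := by
    rw [intervalIntegral.integral_const_mul]
    have hphi_int : ∀ a b : ℝ, IntervalIntegrable
        (fun v : ℝ => (1 + ((m:ℝ) * ((1 - 2 ^ (H - 1)) / 2)) * (|v - u| / (2 * u)) ^ (2 * H))⁻¹)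
        volume a b := fun a b => (aux_phi_cont hH hH1 hmκ.le h2u).intervalIntegrable a b
    have hsplit : ∫ v in (0:ℝ)..T,
          (1 + ((m:ℝ) * ((1 - 2 ^ (H - 1)) / 2)) * (|v - u| / (2 * u)) ^ (2 * H))⁻¹
        = (∫ v in (0:ℝ)..u,
            (1 + ((m:ℝ) * ((1 - 2 ^ (H - 1)) / 2)) * (|v - u| / (2 * u)) ^ (2 * H))⁻¹)
          + ∫ v in u..T,
            (1 + ((m:ℝ) * ((1 - 2 ^ (H - 1)) / 2)) * (|v - u| / (2 * u)) ^ (2 * H))⁻¹ :=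
      (intervalIntegral.integral_add_adjacent_intervals (hphi_int 0 u) (hphi_int u T)).symm
    have hhalf : u / (2 * u) = 1 / 2 := by
      rw [div_eq_div_iff h2u.ne' (by norm_num : (2:ℝ) ≠ 0)]
      ring
    have hJ := aux_J hH hH1 hmκ (by norm_num : (0:ℝ) ≤ 1/2)
    have hJ2 := aux_J hH hH1 hmκ (b := (T - u)/(2*u)) (div_nonneg (by linarith) h2u.le)
    have bound1 : ∫ v in (0:ℝ)..u,
          (1 + ((m:ℝ) * ((1 - 2 ^ (H - 1)) / 2)) * (|v - u| / (2 * u)) ^ (2 * H))⁻¹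
        ≤ 2 * u * ((2 * H / (2 * H - 1))
            * ((m:ℝ) * ((1 - 2 ^ (H - 1)) / 2)) ^ (-(1 / (2 * H)))) := by
      have hcongr : Set.EqOn
          (fun v : ℝ => (1 + ((m:ℝ) * ((1 - 2 ^ (H - 1)) / 2)) * (|v - u| / (2 * u)) ^ (2 * H))⁻¹)
          (fun v : ℝ => (1 + ((m:ℝ) * ((1 - 2 ^ (H - 1)) / 2)) * ((u - v) / (2 * u)) ^ (2 * H))⁻¹)
          (Set.uIcc 0 u) := by
        intro v hv
        rw [Set.uIcc_of_le hu.le] at hv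
        simp only
        rw [abs_sub_comm, abs_of_nonneg (by linarith [hv.2] : (0:ℝ) ≤ u - v)]
      rw [intervalIntegral.integral_congr hcongr,
        intervalIntegral.integral_comp_sub_left
          (fun x : ℝ => (1 + ((m:ℝ) * ((1 - 2 ^ (H - 1)) / 2)) * (x / (2 * u)) ^ (2 * H))⁻¹) u,
        sub_self, sub_zero,
        intervalIntegral.integral_comp_div
          (fun w : ℝ => (1 + ((m:ℝ) * ((1 - 2 ^ (H - 1)) / 2)) * w ^ (2 * H))⁻¹) h2u.ne',
        zero_div, hhalf, smul_eq_mul]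
      exact mul_le_mul_of_nonneg_left hJ h2u.le
    have bound2 : ∫ v in u..T,
          (1 + ((m:ℝ) * ((1 - 2 ^ (H - 1)) / 2)) * (|v - u| / (2 * u)) ^ (2 * H))⁻¹
        ≤ 2 * u * ((2 * H / (2 * H - 1))
            * ((m:ℝ) * ((1 - 2 ^ (H - 1)) / 2)) ^ (-(1 / (2 * H)))) := by
      have hcongr : Set.EqOn
          (fun v : ℝ => (1 + ((m:ℝ) * ((1 - 2 ^ (H - 1)) / 2)) * (|v - u| / (2 * u)) ^ (2 * H))⁻¹)
          (fun v : ℝ => (1 + ((m:ℝ) * ((1 - 2 ^ (H - 1)) / 2)) * ((v - u) / (2 * u)) ^ (2 * H))⁻¹)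
          (Set.uIcc u T) := by
        intro v hv
        rw [Set.uIcc_of_le huT] at hv
        simp only
        rw [abs_of_nonneg (by linarith [hv.1] : (0:ℝ) ≤ v - u)]
      rw [intervalIntegral.integral_congr hcongr,
        intervalIntegral.integral_comp_sub_right
          (fun x : ℝ => (1 + ((m:ℝ) * ((1 - 2 ^ (H - 1)) / 2)) * (x / (2 * u)) ^ (2 * H))⁻¹) u,
        sub_self,
        intervalIntegral.integral_comp_div
          (fun w : ℝ => (1 + ((m:ℝ) * ((1 - 2 ^ (H - 1)) / 2)) * w ^ (2 * H))⁻¹) h2u.ne',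
        zero_div, smul_eq_mul]
      exact mul_le_mul_of_nonneg_left hJ2 h2u.le
    have huu : u ^ (-(2 * H)) * u = u ^ (1 - 2 * H) := by
      nth_rewrite 2 [← Real.rpow_one u]
      rw [← Real.rpow_add hu]
      congr 1
      ring
    have hpos2 : (0:ℝ) ≤ 2 ^ H * u ^ (-(2 * H)) :=
      mul_nonneg (Real.rpow_nonneg (by norm_num) _) (Real.rpow_nonneg hu.le _)
    calc 2 ^ H * u ^ (-(2 * H)) * ∫ v in (0:ℝ)..T,
            (1 + ((m:ℝ) * ((1 - 2 ^ (H - 1)) / 2)) * (|v - u| / (2 * u)) ^ (2 * H))⁻¹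
        ≤ 2 ^ H * u ^ (-(2 * H)) * (4 * u * ((2 * H / (2 * H - 1))
            * ((m:ℝ) * ((1 - 2 ^ (H - 1)) / 2)) ^ (-(1 / (2 * H))))) := by
          apply mul_le_mul_of_nonneg_left _ hpos2
          rw [hsplit]
          linarith
      _ = (2 ^ H * (2 * H / (2 * H - 1))
            * ((m:ℝ) * ((1 - 2 ^ (H - 1)) / 2)) ^ (-(1 / (2 * H))) * 4) * (u ^ (-(2 * H)) * u) := by
          ring
      _ = _ := by rw [huu]
  rw [e1] at step1
  linarith [e2]

include hH hH1 in
lemma aux_rpow_integral2 {T : ℝ} (hT : 0 ≤ T) :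
    ∫ v in (0:ℝ)..T, v ^ (1 - 2 * H) = T ^ (2 - 2 * H) / (2 - 2 * H) := by
  rw [integral_rpow (Or.inl (by linarith : (-1:ℝ) < 1 - 2 * H))]
  rw [Real.zero_rpow (by intro h; linarith [h.ge, h.le] : 1 - 2 * H + 1 ≠ 0), sub_zero,
    show 1 - 2 * H + 1 = 2 - 2 * H by ring]

include hH hH1 in
lemma aux_double {T : ℝ} (hT : 0 < T) {m : ℕ} (hm : 1 ≤ m) :
    ∫ u in (0:ℝ)..T, ∫ v in (0:ℝ)..T,
        (fbmCov H u v) ^ m * u ^ (-(H * (m + 1))) * v ^ (-(H * (m + 1)))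
      ≤ (4 / (m * ((1 - 2 ^ (H - 1)) / 2)) * (T ^ (1 - H) / (1 - H))) * (T ^ (1 - H) / (1 - H))
        + (2 ^ H * (2 * H / (2 * H - 1))
            * ((m:ℝ) * ((1 - 2 ^ (H - 1)) / 2)) ^ (-(1 / (2 * H))) * 4)
          * (T ^ (2 - 2 * H) / (2 - 2 * H)) := by
  have hHpos : 0 < H := by linarith
  have hc0 : (0:ℝ) < 1 - 2 ^ (H - 1) := by
    have : (2:ℝ) ^ (H - 1) < 1 := rpow_lt_one_of_one_lt_of_neg one_lt_two (by linarith)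
    linarith
  have hm1 : (1:ℝ) ≤ (m:ℝ) := by exact_mod_cast hm
  have hmκ : (0:ℝ) < (m:ℝ) * ((1 - 2 ^ (H - 1)) / 2) := by positivity
  have h2H : (0:ℝ) ≤ 2 * H := by linarith
  -- joint measurability
  have hjoint : AEStronglyMeasurable
      (fun p : ℝ × ℝ => (fbmCov H p.1 p.2) ^ m * p.1 ^ (-(H * (m + 1))) * p.2 ^ (-(H * (m + 1))))
      ((volume.restrict (Set.Ioc (0:ℝ) T)).prod (volume.restrict (Set.Ioc (0:ℝ) T))) := by
    rw [Measure.prod_restrict]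
    apply ContinuousOn.aestronglyMeasurable _ (measurableSet_Ioc.prod measurableSet_Ioc)
    have hcovc : Continuous (fun p : ℝ × ℝ => fbmCov H p.1 p.2) := by
      unfold fbmCov
      exact ((((Real.continuous_rpow_const h2H).comp continuous_fst).add
        ((Real.continuous_rpow_const h2H).comp continuous_snd)).sub
        ((Real.continuous_rpow_const h2H).comp ((continuous_fst.sub continuous_snd).abs))).div_const 2
    apply ContinuousOn.mul
    · apply ContinuousOn.mul
      · exact (hcovc.pow m).continuousOn
      · exact ContinuousOn.rpow_const continuous_fst.continuousOn
          (fun x hx => Or.inl (ne_of_gt hx.1.1))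
    · exact ContinuousOn.rpow_const continuous_snd.continuousOn
        (fun x hx => Or.inl (ne_of_gt hx.2.1))
  have hInner_eq : (fun u : ℝ => ∫ v in (0:ℝ)..T,
        (fbmCov H u v) ^ m * u ^ (-(H * (m + 1))) * v ^ (-(H * (m + 1))))
      = fun u : ℝ => ∫ v in Set.Ioc (0:ℝ) T,
        (fbmCov H u v) ^ m * u ^ (-(H * (m + 1))) * v ^ (-(H * (m + 1))) :=
    funext fun u => intervalIntegral.integral_of_le hT.le
  have hInner_meas : AEStronglyMeasurable
      (fun u : ℝ => ∫ v in (0:ℝ)..T,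
        (fbmCov H u v) ^ m * u ^ (-(H * (m + 1))) * v ^ (-(H * (m + 1))))
      (volume.restrict (Set.uIoc (0:ℝ) T)) := by
    rw [hInner_eq, Set.uIoc_of_le hT.le]
    exact hjoint.integral_prod_right'
  have hInner_int : IntervalIntegrable
      (fun u : ℝ => ∫ v in (0:ℝ)..T,
        (fbmCov H u v) ^ m * u ^ (-(H * (m + 1))) * v ^ (-(H * (m + 1))))
      volume 0 T := by
    apply IntervalIntegrable.mono_fun'
      (g := fun u : ℝ => (T ^ (1 - H) / (1 - H)) * u ^ (-H)) _ hInner_meas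
    · filter_upwards [ae_restrict_mem measurableSet_uIoc] with u hu
      rw [Set.uIoc_of_le hT.le] at hu
      have hu0 : 0 < u := hu.1
      have hnn : 0 ≤ ∫ v in (0:ℝ)..T,
          (fbmCov H u v) ^ m * u ^ (-(H * (m + 1))) * v ^ (-(H * (m + 1))) := by
        apply intervalIntegral.integral_nonneg hT.le
        intro v hv
        exact aux_f_nonneg hH hH1 hu0.le hv.1
      rw [Real.norm_eq_abs, abs_of_nonneg hnn]
      calc ∫ v in (0:ℝ)..T, (fbmCov H u v) ^ m * u ^ (-(H * (m + 1))) * v ^ (-(H * (m + 1)))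
          ≤ ∫ v in (0:ℝ)..T, u ^ (-H) * v ^ (-H) := by
            apply intervalIntegral.integral_mono_on hT.le
              (aux_f_integrable hH hH1 hu0 le_rfl hT.le)
              ((intervalIntegral.intervalIntegrable_rpow'
                (by linarith : (-1:ℝ) < -H)).const_mul _)
            intro v hv
            exact aux_f_le_simple hH hH1 hu0 hv.1
        _ = (T ^ (1 - H) / (1 - H)) * u ^ (-H) := by
            rw [intervalIntegral.integral_const_mul, aux_rpow_integral hH hH1 hT.le]
            ring
    · exact (intervalIntegral.intervalIntegrable_rpow' (by linarith : (-1:ℝ) < -H)).const_mul _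
  have hG_int : IntervalIntegrable
      (fun u : ℝ => (4 / (m * ((1 - 2 ^ (H - 1)) / 2)) * (T ^ (1 - H) / (1 - H))) * u ^ (-H)
        + (2 ^ H * (2 * H / (2 * H - 1))
            * ((m:ℝ) * ((1 - 2 ^ (H - 1)) / 2)) ^ (-(1 / (2 * H))) * 4) * u ^ (1 - 2 * H))
      volume 0 T :=
    ((intervalIntegral.intervalIntegrable_rpow' (by linarith : (-1:ℝ) < -H)).const_mul _).add
      ((intervalIntegral.intervalIntegrable_rpow' (by linarith : (-1:ℝ) < 1 - 2*H)).const_mul _)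
  calc ∫ u in (0:ℝ)..T, ∫ v in (0:ℝ)..T,
          (fbmCov H u v) ^ m * u ^ (-(H * (m + 1))) * v ^ (-(H * (m + 1)))
      ≤ ∫ u in (0:ℝ)..T,
          ((4 / (m * ((1 - 2 ^ (H - 1)) / 2)) * (T ^ (1 - H) / (1 - H))) * u ^ (-H)
          + (2 ^ H * (2 * H / (2 * H - 1))
              * ((m:ℝ) * ((1 - 2 ^ (H - 1)) / 2)) ^ (-(1 / (2 * H))) * 4) * u ^ (1 - 2 * H)) := by
        apply intervalIntegral.integral_mono_on hT.le hInner_int hG_int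
        intro u hu
        rcases eq_or_lt_of_le hu.1 with hu0 | hu0
        · rw [← hu0]
          have hz1 : (0:ℝ) ^ (-(H * ((m:ℝ) + 1))) = 0 :=
            Real.zero_rpow (ne_of_lt (by nlinarith : -(H * ((m:ℝ) + 1)) < 0))
          have hz2 : (0:ℝ) ^ (-H) = 0 :=
            Real.zero_rpow (ne_of_lt (by linarith : -H < 0))
          have hz3 : (0:ℝ) ^ (1 - 2 * H) = 0 :=
            Real.zero_rpow (ne_of_lt (by linarith : 1 - 2 * H < 0))
          simp [hz1, hz2, hz3]
        · exact aux_inner hH hH1 hT hm hu0 hu.2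
    _ = (4 / (m * ((1 - 2 ^ (H - 1)) / 2)) * (T ^ (1 - H) / (1 - H))) * (T ^ (1 - H) / (1 - H))
        + (2 ^ H * (2 * H / (2 * H - 1))
            * ((m:ℝ) * ((1 - 2 ^ (H - 1)) / 2)) ^ (-(1 / (2 * H))) * 4)
          * (T ^ (2 - 2 * H) / (2 - 2 * H)) := by
        rw [intervalIntegral.integral_add
          ((intervalIntegral.intervalIntegrable_rpow' (by linarith : (-1:ℝ) < -H)).const_mul _)
          ((intervalIntegral.intervalIntegrable_rpow'
            (by linarith : (-1:ℝ) < 1 - 2*H)).const_mul _),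
          intervalIntegral.integral_const_mul, intervalIntegral.integral_const_mul,
          aux_rpow_integral hH hH1 hT.le, aux_rpow_integral2 hH hH1 hT.le]

end Aux

set_option maxHeartbeats 1000000 in
/-- for `H ∈ (1/2,1)` and `T > 0`, there is `c = c(H,T) > 0` such that for
every `n ≥ 1`, `∫_0^T ∫_0^T R(u,v)^{n−1} u^{−Hn} v^{−Hn} du dv ≤ c · n^{−1/(2H)}`. -/
theorem fbm_covariance_integral_bound
    (H T : ℝ) (hH : 1 / 2 < H) (hH1 : H < 1) (hT : 0 < T) :
    ∃ c : ℝ, 0 < c ∧ ∀ n : ℕ, 1 ≤ n →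
      ∫ u in (0 : ℝ)..T, ∫ v in (0 : ℝ)..T,
        (fbmCov H u v) ^ (n - 1) * u ^ (-(H * n)) * v ^ (-(H * n))
      ≤ c * (n : ℝ) ^ (-(1 / (2 * H))) := by
  have hHpos : 0 < H := by linarith
  have hc0 : (0:ℝ) < 1 - 2 ^ (H - 1) := by
    have : (2:ℝ) ^ (H - 1) < 1 := rpow_lt_one_of_one_lt_of_neg one_lt_two (by linarith)
    linarith
  have hκ : (0:ℝ) < (1 - 2 ^ (H - 1)) / 2 := by linarith
  have hK : (0:ℝ) < T ^ (1 - H) / (1 - H) :=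
    div_pos (Real.rpow_pos_of_pos hT _) (by linarith)
  have hQ : (0:ℝ) < T ^ (2 - 2 * H) / (2 - 2 * H) :=
    div_pos (Real.rpow_pos_of_pos hT _) (by linarith)
  have hD : (0:ℝ) < 2 ^ H * (2 * H / (2 * H - 1)) :=
    mul_pos (Real.rpow_pos_of_pos two_pos _) (div_pos (by linarith) (by linarith))
  have hs1 : 1 / (2 * H) ≤ 1 := by
    rw [div_le_one (by linarith)]; linarith
  have h2κ : (1:ℝ) ≤ 2 / ((1 - 2 ^ (H - 1)) / 2) := by
    rw [le_div_iff₀ hκ]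
    have : (0:ℝ) < 2 ^ (H - 1) := Real.rpow_pos_of_pos two_pos _
    linarith
  refine ⟨(T ^ (1 - H) / (1 - H)) * (T ^ (1 - H) / (1 - H))
    + 8 / ((1 - 2 ^ (H - 1)) / 2)
        * ((T ^ (1 - H) / (1 - H)) * (T ^ (1 - H) / (1 - H)))
    + 2 ^ H * (2 * H / (2 * H - 1)) * 4 * (T ^ (2 - 2 * H) / (2 - 2 * H))
        * (2 / ((1 - 2 ^ (H - 1)) / 2)), ?_, ?_⟩
  · have h8 : (0:ℝ) < 8 / ((1 - 2 ^ (H - 1)) / 2) := by positivity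
    have h2 : (0:ℝ) < 2 / ((1 - 2 ^ (H - 1)) / 2) := by positivity
    positivity
  intro n hn
  have hn1 : (1:ℝ) ≤ (n:ℝ) := by exact_mod_cast hn
  have hns : (0:ℝ) < (n:ℝ) ^ (-(1 / (2 * H))) := Real.rpow_pos_of_pos (by linarith) _
  rcases eq_or_lt_of_le hn with h1 | h2
  · -- n = 1
    rw [← h1]
    simp only [Nat.cast_one, mul_one, pow_zero, one_mul, Nat.sub_self, Real.one_rpow]
    have inner_eq : ∀ u : ℝ, (∫ v in (0:ℝ)..T, u ^ (-H) * v ^ (-H))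
        = (T ^ (1 - H) / (1 - H)) * u ^ (-H) := by
      intro u
      rw [intervalIntegral.integral_const_mul, aux_rpow_integral hH hH1 hT.le]
      ring
    rw [intervalIntegral.integral_congr
      (g := fun u : ℝ => (T ^ (1 - H) / (1 - H)) * u ^ (-H)) (fun u _ => inner_eq u),
      intervalIntegral.integral_const_mul, aux_rpow_integral hH hH1 hT.le]
    have h8 : (0:ℝ) < 8 / ((1 - 2 ^ (H - 1)) / 2) := by positivity
    have h2' : (0:ℝ) < 2 / ((1 - 2 ^ (H - 1)) / 2) := by positivity
    nlinarith [mul_pos (mul_pos h8 hK) hK, mul_pos (mul_pos (mul_pos hD (by norm_num : (0:ℝ) < 4)) hQ) h2']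
  · -- n ≥ 2
    obtain ⟨m, rfl⟩ : ∃ m, n = m + 1 := ⟨n - 1, by omega⟩
    have hm : 1 ≤ m := by omega
    have hm1 : (1:ℝ) ≤ (m:ℝ) := by exact_mod_cast hm
    have hmκ : (0:ℝ) < (m:ℝ) * ((1 - 2 ^ (H - 1)) / 2) := by positivity
    have hcast : ((m + 1 : ℕ) : ℝ) = (m:ℝ) + 1 := by push_cast; ring
    have hstep : ∫ u in (0:ℝ)..T, ∫ v in (0:ℝ)..T,
          (fbmCov H u v) ^ (m + 1 - 1) * u ^ (-(H * ((m+1:ℕ):ℝ))) * v ^ (-(H * ((m+1:ℕ):ℝ)))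
        ≤ (4 / (m * ((1 - 2 ^ (H - 1)) / 2)) * (T ^ (1 - H) / (1 - H)))
            * (T ^ (1 - H) / (1 - H))
          + (2 ^ H * (2 * H / (2 * H - 1))
              * ((m:ℝ) * ((1 - 2 ^ (H - 1)) / 2)) ^ (-(1 / (2 * H))) * 4)
            * (T ^ (2 - 2 * H) / (2 - 2 * H)) := by
      have := aux_double hH hH1 hT hm
      simpa [hcast, Nat.add_sub_cancel] using this
    have hnm : ((m + 1 : ℕ) : ℝ) ≤ 2 * (m:ℝ) := by push_cast; linarith
    have hnpos : (0:ℝ) < ((m + 1 : ℕ) : ℝ) := by positivity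
    have hinv : ((m + 1 : ℕ) : ℝ)⁻¹ ≤ ((m + 1 : ℕ) : ℝ) ^ (-(1 / (2 * H))) := by
      rw [← Real.rpow_neg_one]
      apply Real.rpow_le_rpow_of_exponent_le hn1
      simp only [neg_le_neg_iff]
      exact hs1
    have key1 : 4 / ((m:ℝ) * ((1 - 2 ^ (H - 1)) / 2))
        ≤ 8 / ((1 - 2 ^ (H - 1)) / 2) * ((m + 1 : ℕ) : ℝ) ^ (-(1 / (2 * H))) := by
      have step_a : 4 / ((m:ℝ) * ((1 - 2 ^ (H - 1)) / 2))
          ≤ 8 / ((1 - 2 ^ (H - 1)) / 2) * ((m + 1 : ℕ) : ℝ)⁻¹ := by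
        have e : 8 / ((1 - 2 ^ (H - 1)) / 2) * ((m + 1 : ℕ) : ℝ)⁻¹
            = 8 / (((1 - 2 ^ (H - 1)) / 2) * ((m + 1 : ℕ) : ℝ)) := by
          rw [← one_div, div_mul_div_comm, mul_one]
        rw [e, div_le_div_iff₀ hmκ (by positivity)]
        nlinarith [mul_le_mul_of_nonneg_left hnm hκ.le]
      calc 4 / ((m:ℝ) * ((1 - 2 ^ (H - 1)) / 2))
          ≤ 8 / ((1 - 2 ^ (H - 1)) / 2) * ((m + 1 : ℕ) : ℝ)⁻¹ := step_a
        _ ≤ _ := mul_le_mul_of_nonneg_left hinv (by positivity)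
    have key2 : ((m:ℝ) * ((1 - 2 ^ (H - 1)) / 2)) ^ (-(1 / (2 * H)))
        ≤ 2 / ((1 - 2 ^ (H - 1)) / 2) * ((m + 1 : ℕ) : ℝ) ^ (-(1 / (2 * H))) := by
      have hlow : ((1 - 2 ^ (H - 1)) / 2 / 2) * ((m + 1 : ℕ) : ℝ)
          ≤ (m:ℝ) * ((1 - 2 ^ (H - 1)) / 2) := by
        push_cast
        nlinarith
      have hlowpos : (0:ℝ) < ((1 - 2 ^ (H - 1)) / 2 / 2) * ((m + 1 : ℕ) : ℝ) := by positivity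
      calc ((m:ℝ) * ((1 - 2 ^ (H - 1)) / 2)) ^ (-(1 / (2 * H)))
          ≤ (((1 - 2 ^ (H - 1)) / 2 / 2) * ((m + 1 : ℕ) : ℝ)) ^ (-(1 / (2 * H))) :=
            Real.rpow_le_rpow_of_nonpos hlowpos hlow (neg_nonpos.mpr (by positivity))
        _ = ((1 - 2 ^ (H - 1)) / 2 / 2) ^ (-(1 / (2 * H)))
              * ((m + 1 : ℕ) : ℝ) ^ (-(1 / (2 * H))) :=
            Real.mul_rpow (by positivity) (by positivity)
        _ ≤ 2 / ((1 - 2 ^ (H - 1)) / 2) * ((m + 1 : ℕ) : ℝ) ^ (-(1 / (2 * H))) := by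
            apply mul_le_mul_of_nonneg_right _ hns.le
            have e1 : ((1 - (2:ℝ) ^ (H - 1)) / 2 / 2) ^ (-(1 / (2 * H)))
                = ((2:ℝ) / ((1 - (2:ℝ) ^ (H - 1)) / 2)) ^ (1 / (2 * H)) := by
              rw [Real.rpow_neg (by positivity), ← Real.inv_rpow (by positivity), inv_div]
            rw [e1]
            calc ((2:ℝ) / ((1 - (2:ℝ) ^ (H - 1)) / 2)) ^ (1 / (2 * H))
                ≤ ((2:ℝ) / ((1 - (2:ℝ) ^ (H - 1)) / 2)) ^ (1:ℝ) :=
                  Real.rpow_le_rpow_of_exponent_le h2κ hs1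
              _ = 2 / ((1 - 2 ^ (H - 1)) / 2) := Real.rpow_one _
    calc ∫ u in (0:ℝ)..T, ∫ v in (0:ℝ)..T,
          (fbmCov H u v) ^ (m + 1 - 1) * u ^ (-(H * ((m+1:ℕ):ℝ))) * v ^ (-(H * ((m+1:ℕ):ℝ)))
        ≤ (4 / (m * ((1 - 2 ^ (H - 1)) / 2)) * (T ^ (1 - H) / (1 - H)))
            * (T ^ (1 - H) / (1 - H))
          + (2 ^ H * (2 * H / (2 * H - 1))
              * ((m:ℝ) * ((1 - 2 ^ (H - 1)) / 2)) ^ (-(1 / (2 * H))) * 4)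
            * (T ^ (2 - 2 * H) / (2 - 2 * H)) := hstep
      _ ≤ ((8 / ((1 - 2 ^ (H - 1)) / 2) * ((m + 1 : ℕ) : ℝ) ^ (-(1 / (2 * H))))
              * (T ^ (1 - H) / (1 - H))) * (T ^ (1 - H) / (1 - H))
          + (2 ^ H * (2 * H / (2 * H - 1))
              * (2 / ((1 - 2 ^ (H - 1)) / 2) * ((m + 1 : ℕ) : ℝ) ^ (-(1 / (2 * H)))) * 4)
            * (T ^ (2 - 2 * H) / (2 - 2 * H)) := by
          apply add_le_add
          · exact mul_le_mul_of_nonneg_right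
              (mul_le_mul_of_nonneg_right key1 hK.le) hK.le
          · apply mul_le_mul_of_nonneg_right _ hQ.le
            apply mul_le_mul_of_nonneg_right _ (by norm_num : (0:ℝ) ≤ 4)
            exact mul_le_mul_of_nonneg_left key2 hD.le
      _ ≤ _ := by
          nlinarith [mul_nonneg (mul_nonneg hK.le hK.le) hns.le]
end

section
/- Let H ∈ (1/2,1). There exists a constant c = c(H) > 0 such that for every integer n ≥ 1, ∫_0^1 R(1,z)^n z^{−Hn−H} (1−z)^{2H−2} dz ≤ c · n^{−(2H−1)/(2H)}. (This is the sharp decay rate of the one-dimensional integral appearing in the diagonal term A(n) of the Watanabe-norm series of the fractional current; note the rate n^{−(2H−1)/(2H)} = n^{−1+1/(2H)}.) -/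
open MeasureTheory Real

lemma fbmCov_one_eq (H z : ℝ) (hz : z ≤ 1) :
    fbmCov H 1 z = (1 + z ^ (2*H) - (1-z) ^ (2*H)) / 2 := by
  unfold fbmCov
  rw [Real.one_rpow, abs_of_nonneg (by linarith)]

lemma rpow_two_mul (x p : ℝ) (hx : 0 ≤ x) : x ^ (2*p) = (x ^ p) ^ 2 := by
  rw [mul_comm, Real.rpow_mul hx, Real.rpow_two]

/-- representation `R(1,z) z^{-H} = 1 - D(z) z^{-H}` -/
lemma fbmCov_repr (H z : ℝ) (hH0 : 0 < H) (hz : 0 < z) (hz1 : z ≤ 1) :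
    fbmCov H 1 z * z ^ (-H)
      = 1 - (((1-z) ^ H) ^ 2 - (1 - z ^ H) ^ 2) / 2 * z ^ (-H) := by
  have hR : fbmCov H 1 z
      = z ^ H - (((1-z) ^ H) ^ 2 - (1 - z ^ H) ^ 2) / 2 := by
    rw [fbmCov_one_eq H z hz1, rpow_two_mul z H hz.le, rpow_two_mul (1-z) H (by linarith)]
    ring
  rw [hR, sub_mul, ← Real.rpow_add hz]
  norm_num

lemma fbmCov_nonneg (H z : ℝ) (hH0 : 0 < H) (hz : 0 ≤ z) (hz1 : z ≤ 1) :
    0 ≤ fbmCov H 1 z := by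
  rw [fbmCov_one_eq H z hz1]
  have h1 : (1-z) ^ (2*H) ≤ 1 :=
    Real.rpow_le_one (by linarith) (by linarith) (by linarith)
  have h2 : 0 ≤ z ^ (2*H) := Real.rpow_nonneg hz _
  linarith

lemma fbmCov_mul_lt_one (H z : ℝ) (hH0 : 0 < H) (hH1 : H < 1) (hz : 0 < z) (hz1 : z < 1) :
    fbmCov H 1 z * z ^ (-H) < 1 := by
  rw [fbmCov_repr H z hH0 hz hz1.le]
  have ha : z < z ^ H := by
    have := Real.rpow_lt_rpow_of_exponent_gt hz hz1 hH1
    rwa [Real.rpow_one] at this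
  have hb : 1 - z ≤ (1-z) ^ H := by
    have := Real.rpow_le_rpow_of_exponent_ge (by linarith : (0:ℝ) < 1 - z)
      (by linarith) hH1.le
    rwa [Real.rpow_one] at this
  have ha1 : z ^ H ≤ 1 := Real.rpow_le_one hz.le hz1.le hH0.le
  have hD : 0 < (((1-z) ^ H) ^ 2 - (1 - z ^ H) ^ 2) / 2 := by
    have h1 : (1 - z ^ H) < (1-z) ^ H := by linarith
    have h2 : 0 ≤ 1 - z ^ H := by linarith
    nlinarith
  have hzH : 0 < z ^ (-H) := Real.rpow_pos_of_pos hz _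
  nlinarith

lemma fbmCov_mul_nonneg (H z : ℝ) (hH0 : 0 < H) (hz : 0 ≤ z) (hz1 : z ≤ 1) :
    0 ≤ fbmCov H 1 z * z ^ (-H) :=
  mul_nonneg (fbmCov_nonneg H z hH0 hz hz1) (Real.rpow_nonneg hz _)

/-- small-z bound -/
lemma fbmCov_mul_le_small (H z : ℝ) (hH : 1/2 < H) (hH1 : H < 1) (hz : 0 < z) (hz1 : z ≤ 1) :
    fbmCov H 1 z * z ^ (-H) ≤ H * z ^ (1-H) + z ^ H / 2 := by
  have hH0 : (0:ℝ) < H := by linarith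
  have hbern : 1 - 2*H*z ≤ (1-z) ^ (2*H) := by
    have := one_add_mul_self_le_rpow_one_add (by linarith : (-1:ℝ) ≤ -z)
      (by linarith : (1:ℝ) ≤ 2*H)
    calc 1 - 2*H*z = 1 + 2*H*(-z) := by ring
      _ ≤ (1 + -z) ^ (2*H) := this
      _ = (1-z) ^ (2*H) := by rw [sub_eq_add_neg]
  have hR : fbmCov H 1 z ≤ H * z + z ^ (2*H) / 2 := by
    rw [fbmCov_one_eq H z hz1]; nlinarith
  have hzH : 0 ≤ z ^ (-H) := Real.rpow_nonneg hz.le _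
  have e1 : z * z ^ (-H) = z ^ (1-H) := by
    nth_rewrite 1 [← Real.rpow_one z]
    rw [← Real.rpow_add hz]; ring_nf
  have e2 : z ^ (2*H) * z ^ (-H) = z ^ H := by
    rw [← Real.rpow_add hz]; ring_nf
  calc fbmCov H 1 z * z ^ (-H) ≤ (H * z + z ^ (2*H) / 2) * z ^ (-H) :=
        mul_le_mul_of_nonneg_right hR hzH
    _ = H * (z * z ^ (-H)) + (z ^ (2*H) * z ^ (-H)) / 2 := by ring
    _ = H * z ^ (1-H) + z ^ H / 2 := by rw [e1, e2]

/-- near `z = 1` exponential bound -/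
lemma fbmCov_mul_le_exp (H z : ℝ) (hH : 1/2 < H) (hH1 : H < 1)
    (hz0 : 0 < z) (hz1 : z < 1) (hδ : 1 - z ≤ (2:ℝ) ^ (-(1/(2-2*H)))) :
    fbmCov H 1 z * z ^ (-H) ≤ Real.exp (-((1-z) ^ (2*H) / 4)) := by
  have hH0 : (0:ℝ) < H := by linarith
  have h1z : (0:ℝ) < 1 - z := by linarith
  have hδpow : ((2:ℝ) ^ (-(1/(2-2*H)))) ^ (2-2*H) = 1/2 := by
    rw [← Real.rpow_mul (by norm_num : (0:ℝ) ≤ 2)]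
    have h22 : (2:ℝ)-2*H ≠ 0 := ne_of_gt (by linarith)
    have he : -(1/(2-2*H)) * (2-2*H) = -1 := by
      field_simp
      rw [div_self (by intro h; apply h22; linarith)]
    rw [he, Real.rpow_neg_one]
    norm_num
  have hb2 : ((1-z) ^ H) ^ 2 = (1-z) ^ (2*H) := (rpow_two_mul (1-z) H h1z.le).symm
  have hza : z ≤ z ^ H := by
    have := Real.rpow_le_rpow_of_exponent_ge hz0 hz1.le hH1.le
    rwa [Real.rpow_one] at this
  have ha1 : z ^ H ≤ 1 := Real.rpow_le_one hz0.le hz1.le hH0.le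
  have hkey : (1 - z ^ H) ^ 2 ≤ (1/2) * (1-z) ^ (2*H) := by
    have h2 : (1 - z ^ H) ^ 2 ≤ (1-z) ^ 2 :=
      pow_le_pow_left₀ (by linarith) (by linarith) 2
    have hsplit : ((1-z):ℝ) ^ (2:ℕ) = (1-z) ^ (2-2*H) * (1-z) ^ (2*H) := by
      rw [← Real.rpow_natCast (1-z) 2, ← Real.rpow_add h1z]
      norm_num
    have hmono : (1-z) ^ (2-2*H) ≤ ((2:ℝ) ^ (-(1/(2-2*H)))) ^ (2-2*H) :=
      Real.rpow_le_rpow h1z.le hδ (by linarith)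
    have hle : (1-z) ^ (2-2*H) ≤ 1/2 := by rw [← hδpow]; exact hmono
    have h3 : ((1-z):ℝ) ^ (2:ℕ) ≤ (1/2) * (1-z) ^ (2*H) := by
      rw [hsplit]
      exact mul_le_mul_of_nonneg_right hle (Real.rpow_nonneg h1z.le _)
    exact le_trans h2 h3
  set D := (((1-z) ^ H) ^ 2 - (1 - z ^ H) ^ 2) / 2 with hD
  have hDge : (1-z) ^ (2*H) / 4 ≤ D := by
    rw [hD, hb2]; linarith
  have hD0 : 0 ≤ D := le_trans (by positivity) hDge
  have hzinv : 1 ≤ z ^ (-H) := by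
    have := Real.rpow_le_rpow_of_exponent_ge hz0 hz1.le (show -H ≤ 0 by linarith)
    rwa [Real.rpow_zero] at this
  have hf : fbmCov H 1 z * z ^ (-H) ≤ 1 - D := by
    rw [fbmCov_repr H z hH0 hz0 hz1.le, ← hD]
    have : D * 1 ≤ D * z ^ (-H) := mul_le_mul_of_nonneg_left hzinv hD0
    linarith
  have hexp : 1 - (1-z) ^ (2*H) / 4 ≤ Real.exp (-((1-z) ^ (2*H) / 4)) := by
    have := Real.add_one_le_exp (-((1-z) ^ (2*H) / 4))
    linarith
  linarith

lemma integrand_eq (H : ℝ) (n : ℕ) (z : ℝ) (hz : 0 < z) :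
    fbmCov H 1 z ^ n * z ^ (-(H*(n:ℝ)) - H) * (1-z) ^ (2*H-2)
      = (fbmCov H 1 z * z ^ (-H)) ^ n * (z ^ (-H) * (1-z) ^ (2*H-2)) := by
  have h1 : z ^ (-(H*(n:ℝ)) - H) = (z ^ (-H)) ^ n * z ^ (-H) := by
    rw [← Real.rpow_natCast (z ^ (-H)) n, ← Real.rpow_mul hz.le, ← Real.rpow_add hz]
    congr 1
    ring
  rw [h1, mul_pow]
  ring

lemma two_rpow_le_two (H : ℝ) (hH : 1/2 < H) (hH1 : H < 1) : ((1:ℝ)/2) ^ (2*H-2) ≤ 2 := by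
  have h2 : ((1:ℝ)/2) ^ (2*H-2) = 2 ^ (2-2*H) := by
    rw [one_div, Real.inv_rpow (by norm_num : (0:ℝ) ≤ 2),
      ← Real.rpow_neg (by norm_num : (0:ℝ) ≤ 2)]
    congr 1; ring
  rw [h2]
  calc (2:ℝ) ^ (2-2*H) ≤ 2 ^ (1:ℝ) :=
        Real.rpow_le_rpow_of_exponent_le one_le_two (by linarith)
    _ = 2 := Real.rpow_one 2

lemma half_rpow_le_two (H : ℝ) (hH : 1/2 < H) (hH1 : H < 1) : ((1:ℝ)/2) ^ (-H) ≤ 2 := by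
  have h2 : ((1:ℝ)/2) ^ (-H) = 2 ^ H := by
    rw [one_div, Real.inv_rpow (by norm_num : (0:ℝ) ≤ 2),
      ← Real.rpow_neg (by norm_num : (0:ℝ) ≤ 2)]
    congr 1; ring
  rw [h2]
  calc (2:ℝ) ^ H ≤ 2 ^ (1:ℝ) :=
        Real.rpow_le_rpow_of_exponent_le one_le_two (by linarith)
    _ = 2 := Real.rpow_one 2

lemma W_int_left (H : ℝ) (hH : 1/2 < H) (hH1 : H < 1) :
    IntervalIntegrable (fun z : ℝ => z ^ (-H) * (1-z) ^ (2*H-2)) volume 0 (1/2) := by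
  have hbase : IntervalIntegrable (fun z : ℝ => 2 * z ^ (-H)) volume 0 (1/2) :=
    (intervalIntegral.intervalIntegrable_rpow' (by linarith)).const_mul 2
  apply hbase.mono_fun
  · exact (by fun_prop : Measurable fun z : ℝ => z ^ (-H) * (1-z) ^ (2*H-2)).aestronglyMeasurable.restrict
  · rw [Set.uIoc_of_le (by norm_num : (0:ℝ) ≤ 1/2)]
    refine MeasureTheory.ae_restrict_of_forall_mem measurableSet_Ioc ?_
    intro z hz
    have hz0 : (0:ℝ) < z := hz.1
    have hz2 : z ≤ 1/2 := hz.2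
    have h1 : ((1:ℝ)-z) ^ (2*H-2) ≤ 2 := by
      refine le_trans ?_ (two_rpow_le_two H hH hH1)
      exact Real.rpow_le_rpow_of_nonpos (by norm_num) (by linarith) (by linarith)
    have hw0 : 0 ≤ z ^ (-H) := Real.rpow_nonneg hz0.le _
    have hw1 : 0 ≤ ((1:ℝ)-z) ^ (2*H-2) := Real.rpow_nonneg (by linarith) _
    simp only [Real.norm_eq_abs]
    rw [abs_of_nonneg (mul_nonneg hw0 hw1), abs_of_nonneg (by positivity)]
    calc z ^ (-H) * (1-z) ^ (2*H-2) ≤ z ^ (-H) * 2 := mul_le_mul_of_nonneg_left h1 hw0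
      _ = 2 * z ^ (-H) := by ring

lemma oneSub_int (H : ℝ) (hH : 1/2 < H) (a b : ℝ) :
    IntervalIntegrable (fun z : ℝ => (1-z) ^ (2*H-2)) volume a b := by
  have h := (intervalIntegral.intervalIntegrable_rpow' (a := 1-a) (b := 1-b)
    (by linarith : (-1:ℝ) < 2*H-2)).comp_sub_left 1
  simpa using h

lemma W_int_right (H : ℝ) (hH : 1/2 < H) (hH1 : H < 1) :
    IntervalIntegrable (fun z : ℝ => z ^ (-H) * (1-z) ^ (2*H-2)) volume (1/2) 1 := by
  have hbase : IntervalIntegrable (fun z : ℝ => 2 * (1-z) ^ (2*H-2)) volume (1/2) 1 :=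
    (oneSub_int H hH (1/2) 1).const_mul 2
  apply hbase.mono_fun
  · exact (by fun_prop : Measurable fun z : ℝ => z ^ (-H) * (1-z) ^ (2*H-2)).aestronglyMeasurable.restrict
  · rw [Set.uIoc_of_le (by norm_num : (1:ℝ)/2 ≤ 1)]
    refine MeasureTheory.ae_restrict_of_forall_mem measurableSet_Ioc ?_
    intro z hz
    have hz0 : (1:ℝ)/2 < z := hz.1
    have hz2 : z ≤ 1 := hz.2
    have h1 : z ^ (-H) ≤ 2 := by
      refine le_trans ?_ (half_rpow_le_two H hH hH1)
      exact Real.rpow_le_rpow_of_nonpos (by norm_num) hz0.le (by linarith)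
    have hw0 : 0 ≤ z ^ (-H) := Real.rpow_nonneg (by linarith) _
    have hw1 : 0 ≤ ((1:ℝ)-z) ^ (2*H-2) := Real.rpow_nonneg (by linarith) _
    simp only [Real.norm_eq_abs]
    rw [abs_of_nonneg (mul_nonneg hw0 hw1), abs_of_nonneg (by positivity)]
    exact mul_le_mul_of_nonneg_right h1 hw1

lemma W_int (H : ℝ) (hH : 1/2 < H) (hH1 : H < 1) :
    IntervalIntegrable (fun z : ℝ => z ^ (-H) * (1-z) ^ (2*H-2)) volume 0 1 :=
  (W_int_left H hH hH1).trans (W_int_right H hH hH1)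

lemma W_pt_left (H : ℝ) (hH : 1/2 < H) (hH1 : H < 1) (z : ℝ) (hz0 : 0 ≤ z) (hz2 : z ≤ 1/2) :
    z ^ (-H) * (1-z) ^ (2*H-2) ≤ 2 * z ^ (-H) := by
  rcases eq_or_lt_of_le hz0 with h | h
  · rw [← h, Real.zero_rpow (by intro hc; rw [neg_eq_zero] at hc; linarith)]
    norm_num
  · have h1 : ((1:ℝ)-z) ^ (2*H-2) ≤ 2 := by
      refine le_trans ?_ (two_rpow_le_two H hH hH1)
      exact Real.rpow_le_rpow_of_nonpos (by norm_num) (by linarith) (by linarith)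
    have hw0 : 0 ≤ z ^ (-H) := Real.rpow_nonneg hz0 _
    calc z ^ (-H) * (1-z) ^ (2*H-2) ≤ z ^ (-H) * 2 := mul_le_mul_of_nonneg_left h1 hw0
      _ = 2 * z ^ (-H) := by ring

lemma W_pt_right (H : ℝ) (hH : 1/2 < H) (hH1 : H < 1) (z : ℝ) (hz0 : 1/2 ≤ z) (hz2 : z ≤ 1) :
    z ^ (-H) * (1-z) ^ (2*H-2) ≤ 2 * (1-z) ^ (2*H-2) := by
  have h1 : z ^ (-H) ≤ 2 := by
    refine le_trans ?_ (half_rpow_le_two H hH hH1)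
    exact Real.rpow_le_rpow_of_nonpos (by norm_num) hz0 (by linarith)
  have hw1 : 0 ≤ ((1:ℝ)-z) ^ (2*H-2) := Real.rpow_nonneg (by linarith) _
  exact mul_le_mul_of_nonneg_right h1 hw1

lemma oneSub_integral_eq (H : ℝ) :
    ∫ z in (1/2:ℝ)..1, (1-z) ^ (2*H-2) = ∫ u in (0:ℝ)..(1/2), u ^ (2*H-2) := by
  have h := intervalIntegral.integral_comp_sub_left (a := (1/2:ℝ)) (b := 1)
    (fun u : ℝ => u ^ (2*H-2)) 1
  norm_num at h
  exact h

lemma W_integral_le (H : ℝ) (hH : 1/2 < H) (hH1 : H < 1) :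
    ∫ z in (0:ℝ)..1, z ^ (-H) * (1-z) ^ (2*H-2) ≤ 4/(1-H) + 4/(2*H-1) := by
  rw [← intervalIntegral.integral_add_adjacent_intervals (W_int_left H hH hH1)
    (W_int_right H hH hH1)]
  have hb1 : ∫ z in (0:ℝ)..(1/2), z ^ (-H) * (1-z) ^ (2*H-2) ≤ 4/(1-H) := by
    have hmono : ∫ z in (0:ℝ)..(1/2), z ^ (-H) * (1-z) ^ (2*H-2)
        ≤ ∫ z in (0:ℝ)..(1/2), 2 * z ^ (-H) :=
      intervalIntegral.integral_mono_on (by norm_num) (W_int_left H hH hH1)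
        ((intervalIntegral.intervalIntegrable_rpow' (by linarith)).const_mul 2)
        (fun z hz => W_pt_left H hH hH1 z hz.1 hz.2)
    have hcomp : ∫ z in (0:ℝ)..(1/2), 2 * z ^ (-H) ≤ 4/(1-H) := by
      rw [intervalIntegral.integral_const_mul,
        integral_rpow (Or.inl (by linarith : (-1:ℝ) < -H))]
      rw [Real.zero_rpow (by intro hc; linarith : -H + 1 ≠ 0)]
      have hle : ((1:ℝ)/2) ^ (-H+1) ≤ 1 :=
        Real.rpow_le_one (by norm_num) (by norm_num) (by linarith)
      have h1H : (0:ℝ) < -H + 1 := by linarith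
      calc 2 * (((1/2:ℝ)^(-H+1) - 0) / (-H+1))
          = (2*(1/2:ℝ)^(-H+1)) / (-H+1) := by ring
        _ ≤ 4 / (-H+1) := by gcongr <;> linarith
        _ = 4/(1-H) := by ring_nf
    linarith
  have hb2 : ∫ z in (1/2:ℝ)..1, z ^ (-H) * (1-z) ^ (2*H-2) ≤ 4/(2*H-1) := by
    have hmono : ∫ z in (1/2:ℝ)..1, z ^ (-H) * (1-z) ^ (2*H-2)
        ≤ ∫ z in (1/2:ℝ)..1, 2 * (1-z) ^ (2*H-2) :=
      intervalIntegral.integral_mono_on (by norm_num) (W_int_right H hH hH1)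
        ((oneSub_int H hH _ _).const_mul 2)
        (fun z hz => W_pt_right H hH hH1 z hz.1 hz.2)
    have hcomp : ∫ z in (1/2:ℝ)..1, 2 * (1-z) ^ (2*H-2) ≤ 4/(2*H-1) := by
      rw [intervalIntegral.integral_const_mul, oneSub_integral_eq H,
        integral_rpow (Or.inl (by linarith : (-1:ℝ) < 2*H-2))]
      rw [Real.zero_rpow (by intro hc; linarith : 2*H-2 + 1 ≠ 0)]
      have hle : ((1:ℝ)/2) ^ (2*H-2+1) ≤ 1 :=
        Real.rpow_le_one (by norm_num) (by norm_num) (by linarith)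
      have h1H : (0:ℝ) < 2*H-2+1 := by linarith
      calc 2 * (((1/2:ℝ)^(2*H-2+1) - 0) / (2*H-2+1))
          = (2*(1/2:ℝ)^(2*H-2+1)) / (2*H-2+1) := by ring
        _ ≤ 4 / (2*H-2+1) := by gcongr <;> linarith
        _ = 4/(2*H-1) := by ring_nf
    linarith
  linarith

lemma F0_meas (H : ℝ) (c : ℝ) : Measurable (fun w : ℝ => w ^ (2*H-2) * Real.exp (-(c * w ^ (2*H) /4))) := by
  fun_prop

lemma F0_int1 (H : ℝ) (hH : 1/2 < H) :
    IntervalIntegrable (fun w : ℝ => w ^ (2*H-2) * Real.exp (-(w ^ (2*H) /4))) volume 0 1 := by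
  apply (intervalIntegral.intervalIntegrable_rpow' (by linarith : (-1:ℝ) < 2*H-2)).mono_fun
  · exact (by fun_prop : Measurable fun w : ℝ => w ^ (2*H-2) * Real.exp (-(w ^ (2*H) /4))).aestronglyMeasurable.restrict
  · rw [Set.uIoc_of_le (by norm_num : (0:ℝ) ≤ 1)]
    refine MeasureTheory.ae_restrict_of_forall_mem measurableSet_Ioc ?_
    intro w hw
    have hw0 : (0:ℝ) < w := hw.1
    have hr0 : 0 ≤ w ^ (2*H-2) := Real.rpow_nonneg hw0.le _
    simp only [Real.norm_eq_abs]
    rw [abs_of_nonneg (mul_nonneg hr0 (Real.exp_nonneg _)), abs_of_nonneg hr0]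
    have : Real.exp (-(w ^ (2*H) /4)) ≤ 1 := by
      rw [Real.exp_le_one_iff]
      have : 0 ≤ w ^ (2*H) := Real.rpow_nonneg hw0.le _
      linarith
    calc w ^ (2*H-2) * Real.exp (-(w ^ (2*H) /4)) ≤ w ^ (2*H-2) * 1 :=
          mul_le_mul_of_nonneg_left this hr0
      _ = w ^ (2*H-2) := mul_one _

lemma F0_integral1_le (H : ℝ) (hH : 1/2 < H) :
    ∫ w in (0:ℝ)..1, w ^ (2*H-2) * Real.exp (-(w ^ (2*H) /4)) ≤ 1/(2*H-1) := by
  have hmono : ∫ w in (0:ℝ)..1, w ^ (2*H-2) * Real.exp (-(w ^ (2*H) /4))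
      ≤ ∫ w in (0:ℝ)..1, w ^ (2*H-2) := by
    apply intervalIntegral.integral_mono_on (by norm_num) (F0_int1 H hH)
      (intervalIntegral.intervalIntegrable_rpow' (by linarith))
    intro w hw
    have hr0 : 0 ≤ w ^ (2*H-2) := Real.rpow_nonneg hw.1 _
    have hexp : Real.exp (-(w ^ (2*H) /4)) ≤ 1 := by
      rw [Real.exp_le_one_iff]
      have : 0 ≤ w ^ (2*H) := Real.rpow_nonneg hw.1 _
      linarith
    calc w ^ (2*H-2) * Real.exp (-(w ^ (2*H) /4)) ≤ w ^ (2*H-2) * 1 :=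
          mul_le_mul_of_nonneg_left hexp hr0
      _ = w ^ (2*H-2) := mul_one _
  have hval : ∫ w in (0:ℝ)..1, w ^ (2*H-2) = 1/(2*H-1) := by
    rw [integral_rpow (Or.inl (by linarith : (-1:ℝ) < 2*H-2))]
    rw [Real.one_rpow, Real.zero_rpow (by intro hc; linarith : 2*H-2+1 ≠ 0)]
    ring_nf
  linarith

lemma exp_tail_le (c : ℝ) (hc : 1 ≤ c) :
    ∫ w in (1:ℝ)..c, Real.exp (-(w/4)) ≤ 4 := by
  have hft : ∀ w ∈ Set.uIcc (1:ℝ) c, HasDerivAt (fun w : ℝ => -4 * Real.exp (-(w/4)))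
      (Real.exp (-(w/4))) w := by
    intro w _
    have h1 : HasDerivAt (fun w : ℝ => -(w/4)) (-(1/4)) w := ((hasDerivAt_id w).div_const 4).neg
    have h2 := h1.exp
    have h3 := h2.const_mul (-4 : ℝ)
    convert h3 using 1
    all_goals first | rfl | ring
  have hint : IntervalIntegrable (fun w : ℝ => Real.exp (-(w/4))) volume 1 c :=
    (Real.continuous_exp.comp (by continuity)).intervalIntegrable 1 c
  rw [intervalIntegral.integral_eq_sub_of_hasDerivAt hft hint]
  have h1 : Real.exp (-(c/4)) ≥ 0 := Real.exp_nonneg _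
  have h2 : Real.exp (-((1:ℝ)/4)) ≤ 1 := by
    rw [Real.exp_le_one_iff]; norm_num
  nlinarith

lemma F0_tail_le (H : ℝ) (hH : 1/2 < H) (hH1 : H < 1) (c : ℝ) (hc : 1 ≤ c) :
    ∫ w in (1:ℝ)..c, w ^ (2*H-2) * Real.exp (-(w ^ (2*H) /4)) ≤ 4 := by
  have hcont : ContinuousOn (fun w : ℝ => w ^ (2*H-2) * Real.exp (-(w ^ (2*H) /4)))
      (Set.uIcc 1 c) := by
    rw [Set.uIcc_of_le hc]
    intro w hw
    have hw0 : (0:ℝ) < w := lt_of_lt_of_le one_pos hw.1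
    apply ContinuousWithinAt.mul
    · exact (Real.continuousAt_rpow_const w _ (Or.inl hw0.ne')).continuousWithinAt
    · apply (Real.continuous_exp.continuousAt).comp_continuousWithinAt
      apply ContinuousWithinAt.neg
      apply ContinuousWithinAt.div_const
      exact (Real.continuousAt_rpow_const w _ (Or.inl hw0.ne')).continuousWithinAt
  have hint : IntervalIntegrable (fun w : ℝ => w ^ (2*H-2) * Real.exp (-(w ^ (2*H) /4))) volume 1 c :=
    hcont.intervalIntegrable
  have hintexp : IntervalIntegrable (fun w : ℝ => Real.exp (-(w/4))) volume 1 c :=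
    (Real.continuous_exp.comp (by continuity)).intervalIntegrable 1 c
  have hmono : ∫ w in (1:ℝ)..c, w ^ (2*H-2) * Real.exp (-(w ^ (2*H) /4))
      ≤ ∫ w in (1:ℝ)..c, Real.exp (-(w/4)) := by
    apply intervalIntegral.integral_mono_on hc hint hintexp
    intro w hw
    have hw1 : (1:ℝ) ≤ w := hw.1
    have hr1 : w ^ (2*H-2) ≤ 1 :=
      Real.rpow_le_one_of_one_le_of_nonpos hw1 (by linarith)
    have hwge : w ≤ w ^ (2*H) := by
      have := Real.rpow_le_rpow_of_exponent_le hw1 (by linarith : (1:ℝ) ≤ 2*H)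
      rwa [Real.rpow_one] at this
    have hexp : Real.exp (-(w ^ (2*H) /4)) ≤ Real.exp (-(w/4)) := by
      apply Real.exp_le_exp.2
      linarith
    calc w ^ (2*H-2) * Real.exp (-(w ^ (2*H) /4)) ≤ 1 * Real.exp (-(w/4)) := by
          apply mul_le_mul hr1 hexp (Real.exp_nonneg _) (by norm_num)
      _ = Real.exp (-(w/4)) := one_mul _
  linarith [exp_tail_le c hc]

lemma F0_int_tail (H : ℝ) (hH : 1/2 < H) (c : ℝ) (hc : 1 ≤ c) :
    IntervalIntegrable (fun w : ℝ => w ^ (2*H-2) * Real.exp (-(w ^ (2*H) /4))) volume 1 c := by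
  have hcont : ContinuousOn (fun w : ℝ => w ^ (2*H-2) * Real.exp (-(w ^ (2*H) /4)))
      (Set.uIcc 1 c) := by
    rw [Set.uIcc_of_le hc]
    intro w hw
    have hw0 : (0:ℝ) < w := lt_of_lt_of_le one_pos hw.1
    apply ContinuousWithinAt.mul
    · exact (Real.continuousAt_rpow_const w _ (Or.inl hw0.ne')).continuousWithinAt
    · apply (Real.continuous_exp.continuousAt).comp_continuousWithinAt
      apply ContinuousWithinAt.neg
      apply ContinuousWithinAt.div_const
      exact (Real.continuousAt_rpow_const w _ (Or.inl hw0.ne')).continuousWithinAt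
  exact hcont.intervalIntegrable

lemma J_le (H : ℝ) (hH : 1/2 < H) (hH1 : H < 1) (n : ℕ) (hn : 1 ≤ n) :
    ∫ z in (0:ℝ)..1, (1-z) ^ (2*H-2) * Real.exp (-((n:ℝ) * (1-z) ^ (2*H) /4))
      ≤ (1/(2*H-1) + 4) * (n:ℝ) ^ (-((2*H-1)/(2*H))) := by
  have hn0 : (0:ℝ) < (n:ℝ) := by exact_mod_cast hn
  have hH2 : (0:ℝ) < 2*H := by linarith
  set c := (n:ℝ) ^ (1/(2*H)) with hcdef
  have hc0 : 0 < c := Real.rpow_pos_of_pos hn0 _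
  have hc1 : 1 ≤ c := by
    rw [hcdef]
    calc (1:ℝ) = 1 ^ (1/(2*H)) := (Real.one_rpow _).symm
      _ ≤ (n:ℝ) ^ (1/(2*H)) :=
        Real.rpow_le_rpow zero_le_one (by exact_mod_cast hn) (by positivity)
  -- reflection
  have hrefl : ∫ z in (0:ℝ)..1, (1-z) ^ (2*H-2) * Real.exp (-((n:ℝ) * (1-z) ^ (2*H) /4))
      = ∫ u in (0:ℝ)..1, u ^ (2*H-2) * Real.exp (-((n:ℝ) * u ^ (2*H) /4)) := by
    have h := intervalIntegral.integral_comp_sub_left (a := (0:ℝ)) (b := 1)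
      (fun u : ℝ => u ^ (2*H-2) * Real.exp (-((n:ℝ) * u ^ (2*H) /4))) 1
    norm_num at h
    exact h
  rw [hrefl]
  -- scaling identity
  have hscale : ∀ u ∈ Set.uIcc (0:ℝ) 1,
      u ^ (2*H-2) * Real.exp (-((n:ℝ) * u ^ (2*H) /4))
        = (n:ℝ) ^ ((2-2*H)/(2*H)) * ((c*u) ^ (2*H-2) * Real.exp (-((c*u) ^ (2*H) /4))) := by
    intro u hu
    rw [Set.uIcc_of_le (by norm_num : (0:ℝ) ≤ 1)] at hu
    rcases eq_or_lt_of_le hu.1 with h0 | h0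
    · rw [← h0]
      rw [mul_zero, Real.zero_rpow (by intro hc; linarith : 2*H-2 ≠ 0)]
      ring
    · have hcu : (c*u) ^ (2*H-2) = (n:ℝ) ^ ((2*H-2)/(2*H)) * u ^ (2*H-2) := by
        rw [Real.mul_rpow hc0.le h0.le]
        congr 1
        rw [hcdef, ← Real.rpow_mul hn0.le]
        congr 1
        field_simp
      have hcu2 : (c*u) ^ (2*H) = (n:ℝ) * u ^ (2*H) := by
        rw [Real.mul_rpow hc0.le h0.le]
        congr 1
        rw [hcdef, ← Real.rpow_mul hn0.le]
        rw [show 1/(2*H) * (2*H) = 1 by field_simp]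
        exact Real.rpow_one _
      rw [hcu, hcu2]
      have hcancel : (n:ℝ) ^ ((2-2*H)/(2*H)) * (n:ℝ) ^ ((2*H-2)/(2*H)) = 1 := by
        rw [← Real.rpow_add hn0]
        rw [show (2-2*H)/(2*H) + (2*H-2)/(2*H) = 0 by ring]
        exact Real.rpow_zero _
      calc u ^ (2*H-2) * Real.exp (-((n:ℝ) * u ^ (2*H) /4))
          = ((n:ℝ) ^ ((2-2*H)/(2*H)) * (n:ℝ) ^ ((2*H-2)/(2*H)))
              * (u ^ (2*H-2) * Real.exp (-((n:ℝ) * u ^ (2*H) /4))) := by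
            rw [hcancel]; ring
        _ = (n:ℝ) ^ ((2-2*H)/(2*H)) * ((n:ℝ) ^ ((2*H-2)/(2*H)) * u ^ (2*H-2)
              * Real.exp (-((n:ℝ) * u ^ (2*H) /4))) := by ring
  rw [intervalIntegral.integral_congr hscale, intervalIntegral.integral_const_mul]
  have hcomp : ∫ u in (0:ℝ)..1, (c*u) ^ (2*H-2) * Real.exp (-((c*u) ^ (2*H) /4))
      = c⁻¹ * ∫ w in (0:ℝ)..c, w ^ (2*H-2) * Real.exp (-(w ^ (2*H) /4)) := by
    have h := intervalIntegral.integral_comp_mul_left (a := (0:ℝ)) (b := 1)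
      (fun w : ℝ => w ^ (2*H-2) * Real.exp (-(w ^ (2*H) /4))) hc0.ne'
    rw [mul_zero, mul_one] at h
    rw [h, smul_eq_mul]
  rw [hcomp]
  have hS : ∫ w in (0:ℝ)..c, w ^ (2*H-2) * Real.exp (-(w ^ (2*H) /4)) ≤ 1/(2*H-1) + 4 := by
    rw [← intervalIntegral.integral_add_adjacent_intervals (F0_int1 H hH) (F0_int_tail H hH c hc1)]
    have := F0_integral1_le H hH
    have := F0_tail_le H hH hH1 c hc1
    linarith
  have hS0 : 0 ≤ ∫ w in (0:ℝ)..c, w ^ (2*H-2) * Real.exp (-(w ^ (2*H) /4)) :=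
    intervalIntegral.integral_nonneg hc0.le
      (fun w hw => mul_nonneg (Real.rpow_nonneg hw.1 _) (Real.exp_nonneg _))
  have hpow : (n:ℝ) ^ ((2-2*H)/(2*H)) * c⁻¹ = (n:ℝ) ^ (-((2*H-1)/(2*H))) := by
    rw [hcdef, ← Real.rpow_neg hn0.le, ← Real.rpow_add hn0]
    congr 1; ring
  have hrp : (0:ℝ) ≤ (n:ℝ) ^ ((2-2*H)/(2*H)) * c⁻¹ := by positivity
  calc (n:ℝ) ^ ((2-2*H)/(2*H)) * (c⁻¹ * ∫ w in (0:ℝ)..c, w ^ (2*H-2) * Real.exp (-(w ^ (2*H) /4)))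
      = ((n:ℝ) ^ ((2-2*H)/(2*H)) * c⁻¹) * ∫ w in (0:ℝ)..c, w ^ (2*H-2) * Real.exp (-(w ^ (2*H) /4)) := by
        ring
    _ ≤ ((n:ℝ) ^ ((2-2*H)/(2*H)) * c⁻¹) * (1/(2*H-1) + 4) :=
        mul_le_mul_of_nonneg_left hS hrp
    _ = (1/(2*H-1) + 4) * (n:ℝ) ^ (-((2*H-1)/(2*H))) := by rw [hpow]; ring

set_option maxHeartbeats 2000000 in
/-- for `H ∈ (1/2,1)`, there is `c = c(H) > 0` such that for every `n ≥ 1`,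
`∫_0^1 R(1,z)^n z^{−Hn−H} (1−z)^{2H−2} dz ≤ c · n^{−(2H−1)/(2H)}`. -/
theorem fbm_diagonal_integral_decay
    (H : ℝ) (hH : 1 / 2 < H) (hH1 : H < 1) :
    ∃ c : ℝ, 0 < c ∧ ∀ n : ℕ, 1 ≤ n →
      ∫ z in (0 : ℝ)..1,
        (fbmCov H 1 z) ^ n * z ^ (-(H * n) - H) * (1 - z) ^ (2 * H - 2)
      ≤ c * (n : ℝ) ^ (-((2 * H - 1) / (2 * H))) := by
  have hH0 : (0:ℝ) < H := by linarith
  have h22 : (0:ℝ) < 2 - 2*H := by linarith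
  set δ : ℝ := (2:ℝ) ^ (-(1/(2-2*H))) with hδdef
  have hδ0 : 0 < δ := Real.rpow_pos_of_pos two_pos _
  have hδ1 : δ < 1 := by
    apply Real.rpow_lt_one_of_one_lt_of_neg one_lt_two
    have : (0:ℝ) < 1/(2-2*H) := by positivity
    linarith
  set z₀ : ℝ := 1 - δ with hz₀def
  have hz₀0 : 0 < z₀ := by rw [hz₀def]; linarith
  have hz₀1 : z₀ < 1 := by rw [hz₀def]; linarith
  -- epsilon
  set ε₁ : ℝ := (1/(4*H)) ^ (1/(1-H)) with hε₁def
  set ε₂ : ℝ := ((1:ℝ)/2) ^ (1/H) with hε₂def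
  set ε : ℝ := min z₀ (min ε₁ ε₂) with hεdef
  have hε₁0 : 0 < ε₁ := Real.rpow_pos_of_pos (by positivity) _
  have hε₂0 : 0 < ε₂ := Real.rpow_pos_of_pos (by norm_num) _
  have hε0 : 0 < ε := lt_min hz₀0 (lt_min hε₁0 hε₂0)
  have hεz₀ : ε ≤ z₀ := min_le_left _ _
  -- small-z bound
  have hsmall : ∀ z : ℝ, 0 < z → z ≤ ε → fbmCov H 1 z * z ^ (-H) ≤ 1/2 := by
    intro z hz hzε
    have hz1 : z ≤ 1 := le_trans hzε (le_trans hεz₀ hz₀1.le)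
    have h1 := fbmCov_mul_le_small H z hH hH1 hz hz1
    have h2 : z ^ (1-H) ≤ ε₁ ^ (1-H) :=
      Real.rpow_le_rpow hz.le
        (le_trans hzε (le_trans (min_le_right _ _) (min_le_left _ _))) (by linarith)
    have h3 : ε₁ ^ (1-H) = 1/(4*H) := by
      rw [hε₁def, ← Real.rpow_mul (by positivity),
        one_div_mul_cancel (by intro hc; rw [sub_eq_zero] at hc; exact absurd hc.symm (ne_of_lt hH1) : (1:ℝ)-H ≠ 0), Real.rpow_one]
    have h4 : z ^ H ≤ ε₂ ^ H :=
      Real.rpow_le_rpow hz.le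
        (le_trans hzε (le_trans (min_le_right _ _) (min_le_right _ _))) hH0.le
    have h5 : ε₂ ^ H = 1/2 := by
      rw [hε₂def, ← Real.rpow_mul (by norm_num),
        one_div_mul_cancel hH0.ne', Real.rpow_one]
    rw [h3] at h2
    rw [h5] at h4
    have h6 : H * z ^ (1-H) ≤ H * (1/(4*H)) := mul_le_mul_of_nonneg_left h2 hH0.le
    have h7 : H * (1/(4*H)) = 1/4 := by field_simp
    linarith
  -- compactness on [ε, z₀]
  have hcont : ContinuousOn (fun z : ℝ => fbmCov H 1 z * z ^ (-H)) (Set.Icc ε z₀) := by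
    have h1 : ContinuousOn (fun z : ℝ => z ^ (2*H)) (Set.Icc ε z₀) := fun z hz =>
      (Real.continuousAt_rpow_const z _
        (Or.inl (ne_of_gt (lt_of_lt_of_le hε0 hz.1)))).continuousWithinAt
    have h2 : ContinuousOn (fun z : ℝ => |1 - z| ^ (2*H)) (Set.Icc ε z₀) := by
      apply ContinuousOn.rpow_const ((continuous_const.sub continuous_id).abs.continuousOn)
      intro z hz
      right; linarith
    have h3 : ContinuousOn (fun z : ℝ => z ^ (-H)) (Set.Icc ε z₀) := fun z hz =>
      (Real.continuousAt_rpow_const z _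
        (Or.inl (ne_of_gt (lt_of_lt_of_le hε0 hz.1)))).continuousWithinAt
    show ContinuousOn
      (fun z : ℝ => ((1:ℝ) ^ (2*H) + z ^ (2*H) - |1 - z| ^ (2*H))/2 * z ^ (-H)) _
    exact (((continuousOn_const.add h1).sub h2).div_const 2).mul h3
  obtain ⟨x, hx, hmax⟩ := isCompact_Icc.exists_isMaxOn (Set.nonempty_Icc.mpr hεz₀) hcont
  set m : ℝ := max (fbmCov H 1 x * x ^ (-H)) (1/2) with hmdef
  have hx0 : 0 < x := lt_of_lt_of_le hε0 hx.1
  have hx1 : x < 1 := lt_of_le_of_lt hx.2 hz₀1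
  have hm1 : m < 1 := max_lt (fbmCov_mul_lt_one H x hH0 hH1 hx0 hx1) (by norm_num)
  have hmhalf : 1/2 ≤ m := le_max_right _ _
  have hm0 : (0:ℝ) ≤ m := le_trans (by norm_num) hmhalf
  have hfm : ∀ z : ℝ, 0 < z → z ≤ z₀ → fbmCov H 1 z * z ^ (-H) ≤ m := by
    intro z hz hzz₀
    rcases le_total z ε with h | h
    · exact le_trans (hsmall z hz h) hmhalf
    · exact le_trans (hmax ⟨h, hzz₀⟩) (le_max_left _ _)
  -- geometric constant
  obtain ⟨C₂, hC₂⟩ : ∃ C₂ : ℝ, ∀ k : ℕ, (k:ℝ) * m ^ k ≤ C₂ := by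
    obtain ⟨C₂, hC₂⟩ := (tendsto_pow_const_mul_const_pow_of_lt_one 1 hm0 hm1).bddAbove_range
    refine ⟨C₂, fun k => ?_⟩
    have := hC₂ ⟨k, rfl⟩
    simpa using this
  have hC₂pos : 0 < C₂ := by
    have h := hC₂ 1
    norm_num at h
    linarith
  set C₁ : ℝ := 4/(1-H) + 4/(2*H-1) with hC₁def
  have hC₁pos : 0 < C₁ := by
    rw [hC₁def]
    have : (0:ℝ) < 4/(1-H) := div_pos (by norm_num) (by linarith)
    have : (0:ℝ) < 4/(2*H-1) := div_pos (by norm_num) (by linarith)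
    positivity
  set CF : ℝ := 1/(2*H-1) + 4 with hCFdef
  have hCFpos : 0 < CF := by
    rw [hCFdef]
    have : (0:ℝ) < 1/(2*H-1) := div_pos (by norm_num) (by linarith)
    linarith
  set κ : ℝ := z₀ ^ (-H) with hκdef
  have hκ0 : 0 < κ := Real.rpow_pos_of_pos hz₀0 _
  refine ⟨C₁ * C₂ + κ * CF, by positivity, ?_⟩
  intro n hn
  have hn0 : (0:ℝ) < (n:ℝ) := by exact_mod_cast hn
  -- pointwise: 0 ≤ G ≤ W on (0,1]
  have hGW : ∀ z ∈ Set.Ioc (0:ℝ) 1,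
      0 ≤ fbmCov H 1 z ^ n * z ^ (-(H*(n:ℝ)) - H) * (1-z) ^ (2*H-2) ∧
      fbmCov H 1 z ^ n * z ^ (-(H*(n:ℝ)) - H) * (1-z) ^ (2*H-2)
        ≤ z ^ (-H) * (1-z) ^ (2*H-2) := by
    intro z hz
    have hz0 : 0 < z := hz.1
    have hz1 : z ≤ 1 := hz.2
    rw [integrand_eq H n z hz0]
    have hf0 : 0 ≤ fbmCov H 1 z * z ^ (-H) := fbmCov_mul_nonneg H z hH0 hz0.le hz1
    have hWp : 0 ≤ z ^ (-H) * (1-z) ^ (2*H-2) :=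
      mul_nonneg (Real.rpow_nonneg hz0.le _) (Real.rpow_nonneg (by linarith) _)
    constructor
    · exact mul_nonneg (pow_nonneg hf0 n) hWp
    · rcases eq_or_lt_of_le hz1 with h1 | h1
      · rw [h1]
        simp only [sub_self, Real.zero_rpow (by intro hc; linarith : 2*H-2 ≠ 0)]
        simp
      · have hf1 : fbmCov H 1 z * z ^ (-H) ≤ 1 :=
          (fbmCov_mul_lt_one H z hH0 hH1 hz0 h1).le
        have : (fbmCov H 1 z * z ^ (-H)) ^ n ≤ 1 := pow_le_one₀ hf0 hf1
        nlinarith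
  -- integrability of the integrand
  have hGmeas : Measurable (fun z : ℝ =>
      fbmCov H 1 z ^ n * z ^ (-(H*(n:ℝ)) - H) * (1-z) ^ (2*H-2)) := by
    unfold fbmCov
    fun_prop
  have hGint : IntervalIntegrable (fun z : ℝ =>
      fbmCov H 1 z ^ n * z ^ (-(H*(n:ℝ)) - H) * (1-z) ^ (2*H-2)) volume 0 1 := by
    apply (W_int H hH hH1).mono_fun hGmeas.aestronglyMeasurable.restrict
    rw [Set.uIoc_of_le (by norm_num : (0:ℝ) ≤ 1)]
    refine MeasureTheory.ae_restrict_of_forall_mem measurableSet_Ioc ?_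
    intro z hz
    obtain ⟨hg0, hgW⟩ := hGW z hz
    have hWp : 0 ≤ z ^ (-H) * (1-z) ^ (2*H-2) :=
      mul_nonneg (Real.rpow_nonneg hz.1.le _) (Real.rpow_nonneg (by linarith [hz.2]) _)
    simp only [Real.norm_eq_abs]
    rw [abs_of_nonneg hg0, abs_of_nonneg hWp]
    exact hgW
  -- integrability of the exponential part
  have hEint : IntervalIntegrable (fun z : ℝ =>
      (1-z) ^ (2*H-2) * Real.exp (-((n:ℝ) * (1-z) ^ (2*H) /4))) volume 0 1 := by
    apply (oneSub_int H hH 0 1).mono_fun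
    · exact (by fun_prop : Measurable fun z : ℝ =>
        (1-z) ^ (2*H-2) * Real.exp (-((n:ℝ) * (1-z) ^ (2*H) /4))).aestronglyMeasurable.restrict
    · rw [Set.uIoc_of_le (by norm_num : (0:ℝ) ≤ 1)]
      refine MeasureTheory.ae_restrict_of_forall_mem measurableSet_Ioc ?_
      intro z hz
      have h1z : (0:ℝ) ≤ 1 - z := by linarith [hz.2]
      have hr0 : 0 ≤ (1-z) ^ (2*H-2) := Real.rpow_nonneg h1z _
      have hexp : Real.exp (-((n:ℝ) * (1-z) ^ (2*H) /4)) ≤ 1 := by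
        rw [Real.exp_le_one_iff]
        have : 0 ≤ (1-z) ^ (2*H) := Real.rpow_nonneg h1z _
        have : 0 ≤ (n:ℝ) * (1-z) ^ (2*H) := mul_nonneg hn0.le this
        linarith
      simp only [Real.norm_eq_abs]
      rw [abs_of_nonneg (mul_nonneg hr0 (Real.exp_nonneg _)), abs_of_nonneg hr0]
      calc (1-z) ^ (2*H-2) * Real.exp (-((n:ℝ) * (1-z) ^ (2*H) /4))
          ≤ (1-z) ^ (2*H-2) * 1 := mul_le_mul_of_nonneg_left hexp hr0
        _ = (1-z) ^ (2*H-2) := mul_one _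
  -- main pointwise bound
  have hGB : ∀ z ∈ Set.Icc (0:ℝ) 1,
      fbmCov H 1 z ^ n * z ^ (-(H*(n:ℝ)) - H) * (1-z) ^ (2*H-2)
        ≤ m ^ n * (z ^ (-H) * (1-z) ^ (2*H-2))
          + κ * ((1-z) ^ (2*H-2) * Real.exp (-((n:ℝ) * (1-z) ^ (2*H) /4))) := by
    intro z hz
    have hRHS2 : 0 ≤ κ * ((1-z) ^ (2*H-2) * Real.exp (-((n:ℝ) * (1-z) ^ (2*H) /4))) :=
      mul_nonneg hκ0.le (mul_nonneg (Real.rpow_nonneg (by linarith [hz.2]) _)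
        (Real.exp_nonneg _))
    have hRHS1 : 0 ≤ m ^ n * (z ^ (-H) * (1-z) ^ (2*H-2)) :=
      mul_nonneg (pow_nonneg hm0 n)
        (mul_nonneg (Real.rpow_nonneg hz.1 _) (Real.rpow_nonneg (by linarith [hz.2]) _))
    rcases eq_or_lt_of_le hz.1 with h0 | h0
    · have hne : -(H*(n:ℝ)) - H ≠ 0 := by
        have h1 : 0 ≤ H * (n:ℝ) := mul_nonneg hH0.le hn0.le
        intro hc; linarith
      have hLzero : fbmCov H 1 z ^ n * z ^ (-(H*(n:ℝ)) - H) * (1-z) ^ (2*H-2) = 0 := by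
        rw [← h0, Real.zero_rpow hne, mul_zero, zero_mul]
      rw [hLzero]
      exact add_nonneg hRHS1 hRHS2
    rcases eq_or_lt_of_le hz.2 with h1 | h1
    · have hLzero : fbmCov H 1 z ^ n * z ^ (-(H*(n:ℝ)) - H) * (1-z) ^ (2*H-2) = 0 := by
        rw [h1, sub_self, Real.zero_rpow (by intro hc; linarith : 2*H-2 ≠ 0), mul_zero]
      rw [hLzero]
      exact add_nonneg hRHS1 hRHS2
    · rw [integrand_eq H n z h0]
      have hf0 : 0 ≤ fbmCov H 1 z * z ^ (-H) := fbmCov_mul_nonneg H z hH0 h0.le h1.le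
      have h1z0 : (0:ℝ) ≤ 1 - z := by linarith
      have hWp : 0 ≤ z ^ (-H) * (1-z) ^ (2*H-2) :=
        mul_nonneg (Real.rpow_nonneg h0.le _) (Real.rpow_nonneg h1z0 _)
      rcases le_total z z₀ with hc | hc
      · have hf := hfm z h0 hc
        have hpow : (fbmCov H 1 z * z ^ (-H)) ^ n ≤ m ^ n := pow_le_pow_left₀ hf0 hf n
        have := mul_le_mul_of_nonneg_right hpow hWp
        linarith
      · have hδz : 1 - z ≤ (2:ℝ) ^ (-(1/(2-2*H))) := by
          rw [← hδdef]
          rw [hz₀def] at hc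
          linarith
        have hfe := fbmCov_mul_le_exp H z hH hH1 h0 h1 hδz
        have hpow : (fbmCov H 1 z * z ^ (-H)) ^ n
            ≤ Real.exp (-((n:ℝ) * (1-z) ^ (2*H) /4)) := by
          calc (fbmCov H 1 z * z ^ (-H)) ^ n
              ≤ (Real.exp (-((1-z) ^ (2*H) /4))) ^ n := pow_le_pow_left₀ hf0 hfe n
            _ = Real.exp ((n:ℝ) * (-((1-z) ^ (2*H) /4))) := (Real.exp_nat_mul _ n).symm
            _ = Real.exp (-((n:ℝ) * (1-z) ^ (2*H) /4)) := by ring_nf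
        have hzκ : z ^ (-H) ≤ κ := by
          rw [hκdef]
          exact Real.rpow_le_rpow_of_nonpos hz₀0 hc (by linarith)
        have hr10 : 0 ≤ (1-z) ^ (2*H-2) := Real.rpow_nonneg h1z0 _
        have hmain : (fbmCov H 1 z * z ^ (-H)) ^ n * (z ^ (-H) * (1-z) ^ (2*H-2))
            ≤ Real.exp (-((n:ℝ) * (1-z) ^ (2*H) /4)) * (κ * (1-z) ^ (2*H-2)) := by
          apply mul_le_mul hpow (mul_le_mul_of_nonneg_right hzκ hr10) hWp (Real.exp_nonneg _)
        have heq : Real.exp (-((n:ℝ) * (1-z) ^ (2*H) /4)) * (κ * (1-z) ^ (2*H-2))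
            = κ * ((1-z) ^ (2*H-2) * Real.exp (-((n:ℝ) * (1-z) ^ (2*H) /4))) := by ring
        rw [heq] at hmain
        linarith
  -- compare integrals
  have hIle : (∫ z in (0:ℝ)..1, fbmCov H 1 z ^ n * z ^ (-(H*(n:ℝ)) - H) * (1-z) ^ (2*H-2))
      ≤ m ^ n * (∫ z in (0:ℝ)..1, z ^ (-H) * (1-z) ^ (2*H-2))
        + κ * ∫ z in (0:ℝ)..1, (1-z) ^ (2*H-2) * Real.exp (-((n:ℝ) * (1-z) ^ (2*H) /4)) := by
    have hstep := intervalIntegral.integral_mono_on (by norm_num : (0:ℝ) ≤ 1) hGint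
      (((W_int H hH hH1).const_mul (m ^ n)).add (hEint.const_mul κ)) hGB
    rwa [intervalIntegral.integral_add ((W_int H hH hH1).const_mul (m ^ n))
      (hEint.const_mul κ), intervalIntegral.integral_const_mul,
      intervalIntegral.integral_const_mul] at hstep
  -- bound m^n
  have hmn : m ^ n ≤ C₂ * (n:ℝ) ^ (-((2*H-1)/(2*H))) := by
    have hα1 : (2*H-1)/(2*H) ≤ 1 := by
      rw [div_le_one (by linarith)]
      linarith
    have hnα : (n:ℝ) ^ ((2*H-1)/(2*H)) ≤ (n:ℝ) := by
      have := Real.rpow_le_rpow_of_exponent_le (by exact_mod_cast hn : (1:ℝ) ≤ (n:ℝ)) hα1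
      rwa [Real.rpow_one] at this
    have h1 : (n:ℝ) ^ ((2*H-1)/(2*H)) * m ^ n ≤ C₂ :=
      le_trans (mul_le_mul_of_nonneg_right hnα (pow_nonneg hm0 n)) (hC₂ n)
    have hcancel : (n:ℝ) ^ ((2*H-1)/(2*H)) * (n:ℝ) ^ (-((2*H-1)/(2*H))) = 1 := by
      rw [← Real.rpow_add hn0]
      simp
    have hrnn : 0 ≤ (n:ℝ) ^ (-((2*H-1)/(2*H))) := Real.rpow_nonneg hn0.le _
    calc m ^ n = ((n:ℝ) ^ ((2*H-1)/(2*H)) * m ^ n) * (n:ℝ) ^ (-((2*H-1)/(2*H))) := by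
          rw [mul_comm ((n:ℝ) ^ ((2*H-1)/(2*H))) (m ^ n), mul_assoc, hcancel, mul_one]
      _ ≤ C₂ * (n:ℝ) ^ (-((2*H-1)/(2*H))) := mul_le_mul_of_nonneg_right h1 hrnn
  -- assemble
  have hIW := W_integral_le H hH hH1
  have hIW0 : 0 ≤ ∫ z in (0:ℝ)..1, z ^ (-H) * (1-z) ^ (2*H-2) :=
    intervalIntegral.integral_nonneg (by norm_num)
      (fun z hz => mul_nonneg (Real.rpow_nonneg hz.1 _)
        (Real.rpow_nonneg (by linarith [hz.2]) _))
  have hJ := J_le H hH hH1 n hn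
  have hrnn : 0 ≤ (n:ℝ) ^ (-((2*H-1)/(2*H))) := Real.rpow_nonneg hn0.le _
  have hT1 : m ^ n * (∫ z in (0:ℝ)..1, z ^ (-H) * (1-z) ^ (2*H-2))
      ≤ C₁ * C₂ * (n:ℝ) ^ (-((2*H-1)/(2*H))) := by
    calc m ^ n * (∫ z in (0:ℝ)..1, z ^ (-H) * (1-z) ^ (2*H-2))
        ≤ m ^ n * C₁ := by
          apply mul_le_mul_of_nonneg_left _ (pow_nonneg hm0 n)
          rw [hC₁def]; exact hIW
      _ ≤ (C₂ * (n:ℝ) ^ (-((2*H-1)/(2*H)))) * C₁ :=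
          mul_le_mul_of_nonneg_right hmn hC₁pos.le
      _ = C₁ * C₂ * (n:ℝ) ^ (-((2*H-1)/(2*H))) := by ring
  have hT2 : κ * (∫ z in (0:ℝ)..1, (1-z) ^ (2*H-2) * Real.exp (-((n:ℝ) * (1-z) ^ (2*H) /4)))
      ≤ κ * CF * (n:ℝ) ^ (-((2*H-1)/(2*H))) := by
    calc κ * (∫ z in (0:ℝ)..1, (1-z) ^ (2*H-2) * Real.exp (-((n:ℝ) * (1-z) ^ (2*H) /4)))
        ≤ κ * (CF * (n:ℝ) ^ (-((2*H-1)/(2*H)))) := by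
          apply mul_le_mul_of_nonneg_left _ hκ0.le
          rw [hCFdef]; exact hJ
      _ = κ * CF * (n:ℝ) ^ (-((2*H-1)/(2*H))) := by ring
  calc (∫ z in (0:ℝ)..1, fbmCov H 1 z ^ n * z ^ (-(H*(n:ℝ)) - H) * (1-z) ^ (2*H-2))
      ≤ m ^ n * (∫ z in (0:ℝ)..1, z ^ (-H) * (1-z) ^ (2*H-2))
        + κ * ∫ z in (0:ℝ)..1, (1-z) ^ (2*H-2) * Real.exp (-((n:ℝ) * (1-z) ^ (2*H) /4)) := hIle
    _ ≤ C₁ * C₂ * (n:ℝ) ^ (-((2*H-1)/(2*H))) + κ * CF * (n:ℝ) ^ (-((2*H-1)/(2*H))) :=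
        add_le_add hT1 hT2
    _ = (C₁ * C₂ + κ * CF) * (n:ℝ) ^ (-((2*H-1)/(2*H))) := by ring
end
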